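/- arXiv:2411.02111 — 3 statements merged into one kernel-verified Lean document; each statement's English description precedes it below -/
import Mathlib

section
/- Let G be a finite connected weighted graph and let p, q, s, t be vertices of G with p ≠ q. Then r_G(s,t) = r_{G_{pq}}(s,t) + (1/r_G(p,q))·( j_p(q,s) − j_p(q,t) )². In particular r_G(s,t) ≥ r_{G_{pq}}(s,t), with equality if and only if j_p(q,s) = j_p(q,t). -/
open scoped Classical

/-- A finite weighted multigraph (resistive electrical network): finitely many
vertices and edges; each edge `e` has two endpoints `ends e` and a positive
length (resistance) `len e`.  Multiple edges and self-loops are allowed. -/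
structure WMG where
  V : Type
  E : Type
  instV : Fintype V
  instE : Fintype E
  ends : E → V × V
  len : E → ℝ
  len_pos : ∀ e, 0 < len e

attribute [instance] WMG.instV WMG.instE

/-- The Moore–Penrose pseudoinverse of a real square matrix, characterized by
the four Penrose equations (it exists and is unique for real matrices). -/
noncomputable def Matrix.mpinv {n : Type} [Fintype n] (A : Matrix n n ℝ) : Matrix n n ℝ :=
  if h : ∃ B : Matrix n n ℝ,
      A * B * A = A ∧ B * A * B = B ∧ Matrix.transpose (A * B) = A * B ∧ Matrix.transpose (B * A) = B * A
  then h.choose else 0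

namespace WMG

/-- Indicator function. -/
noncomputable def ind {α : Type} (x y : α) : ℝ := if x = y then 1 else 0

/-- The weighted Laplacian: an edge `e` with endpoints `a, b` contributes
`(1/len e) * (δ_{ua} - δ_{ub}) * (δ_{va} - δ_{vb})` to the `(u,v)` entry.  So
the off-diagonal `(u,v)` entry is `-∑ 1/len e` over the edges joining `u` and
`v`, and all row sums are zero. -/
noncomputable def lap (G : WMG) : Matrix G.V G.V ℝ :=
  ∑ e : G.E, (G.len e)⁻¹ •
    Matrix.of (fun u v : G.V =>
      (ind u (G.ends e).1 - ind u (G.ends e).2) *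
      (ind v (G.ends e).1 - ind v (G.ends e).2))

/-- Effective resistance `r(p,q) = L⁺pp - 2·L⁺pq + L⁺qq`. -/
noncomputable def res (G : WMG) (p q : G.V) : ℝ :=
  G.lap.mpinv p p - 2 * G.lap.mpinv p q + G.lap.mpinv q q

/-- Voltage function `j_p(q,s) = L⁺pp - L⁺pq - L⁺ps + L⁺qs`. -/
noncomputable def volt (G : WMG) (p q s : G.V) : ℝ :=
  G.lap.mpinv p p - G.lap.mpinv p q - G.lap.mpinv p s + G.lap.mpinv q s

/-- Two vertices are adjacent if some edge has them as its endpoints. -/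
def Adj (G : WMG) (u v : G.V) : Prop :=
  ∃ e : G.E, G.ends e = (u, v) ∨ G.ends e = (v, u)

/-- `u` and `v` are joined by a walk in `G`. -/
def Reach (G : WMG) (u v : G.V) : Prop := Relation.ReflTransGen G.Adj u v

/-- `G` is connected. -/
def Connected (G : WMG) : Prop := Nonempty G.V ∧ ∀ u v : G.V, G.Reach u v

/-- Quotient graph: identify vertices along (the equivalence generated by) the
relation `r`; all edges are kept. -/
noncomputable def quot (G : WMG) (r : G.V → G.V → Prop) : WMG where
  V := Quot r
  E := G.E
  instV := Fintype.ofFinite _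
  instE := G.instE
  ends e := (Quot.mk r (G.ends e).1, Quot.mk r (G.ends e).2)
  len := G.len
  len_pos := G.len_pos

/-- The canonical map from the vertices of `G` to those of a quotient of `G`. -/
def quotMap (G : WMG) (r : G.V → G.V → Prop) : G.V → (G.quot r).V := Quot.mk r

/-- `G_{pq}`: identify the vertices `p` and `q`. -/
noncomputable def ident2 (G : WMG) (p q : G.V) : WMG :=
  G.quot (fun x y => x = p ∧ y = q)

def ident2Map (G : WMG) (p q : G.V) : G.V → (G.ident2 p q).V :=
  G.quotMap _

/-- `G_{pqs}`: identify the vertices `p`, `q`, `s` into a single vertex. -/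
noncomputable def ident3 (G : WMG) (p q s : G.V) : WMG :=
  G.quot (fun x y => (x = p ∧ y = q) ∨ (x = p ∧ y = s))

/-- `G_{pq,st}`: identify `p` with `q` and, separately, `s` with `t`. -/
noncomputable def ident22 (G : WMG) (p q s t : G.V) : WMG :=
  G.quot (fun x y => (x = p ∧ y = q) ∨ (x = s ∧ y = t))

/-- `G_S`: identify all vertices in the set `S` into a single vertex. -/
noncomputable def identSet (G : WMG) (S : Set G.V) : WMG :=
  G.quot (fun x y => x ∈ S ∧ y ∈ S)

/-- `G − e`: delete the edge `e` (keeping all vertices). -/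
noncomputable def delete (G : WMG) (e : G.E) : WMG where
  V := G.V
  E := {f : G.E // f ≠ e}
  instV := G.instV
  instE := Fintype.ofFinite _
  ends f := G.ends f.1
  len f := G.len f.1
  len_pos f := G.len_pos f.1

/-- `e` is a bridge if `G − e` is disconnected. -/
def IsBridge (G : WMG) (e : G.E) : Prop := ¬ (G.delete e).Connected

/-- `Ḡ_e`: contract the edge `e` (identify its endpoints and delete it). -/
noncomputable def contract (G : WMG) (e : G.E) : WMG :=
  (G.delete e).quot (fun x y => x = (G.ends e).1 ∧ y = (G.ends e).2)

def contractMap (G : WMG) (e : G.E) : G.V → (G.contract e).V := Quot.mk _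

/-- Replace the length of the edge `e` by `L'`. -/
noncomputable def setLen (G : WMG) (e : G.E) (L' : ℝ) (hL' : 0 < L') : WMG where
  V := G.V
  E := G.E
  instV := G.instV
  instE := G.instE
  ends := G.ends
  len f := if f = e then L' else G.len f
  len_pos f := by
    by_cases hf : f = e
    · simpa [hf] using hL'
    · simpa [hf] using G.len_pos f

/-- `T` is (the edge set of) a spanning tree of `G`: using only edges of `T`
any two vertices are joined, and `T` has (number of vertices) − 1 edges. -/
def IsSpanningTree (G : WMG) (T : Finset G.E) : Prop :=
  (∀ u v : G.V, Relation.ReflTransGen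
      (fun x y => ∃ e ∈ T, G.ends e = (x, y) ∨ G.ends e = (y, x)) u v) ∧
  T.card = Fintype.card G.V - 1

/-- `t G`: the number of spanning trees of `G` (equals `1` for a one-vertex
graph; self-loops contribute nothing). -/
noncomputable def t (G : WMG) : ℕ := Nat.card {T : Finset G.E // G.IsSpanningTree T}

/-- `t(G_{pq})`, with the convention `t(G_{pp}) = 0`. -/
noncomputable def t2 (G : WMG) (p q : G.V) : ℕ :=
  if p = q then 0 else (G.ident2 p q).t

/-- Disjoint union of two graphs. -/
noncomputable def disjUnion (G₁ G₂ : WMG) : WMG where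
  V := G₁.V ⊕ G₂.V
  E := G₁.E ⊕ G₂.E
  instV := inferInstance
  instE := inferInstance
  ends := Sum.elim (fun e => (Sum.inl (G₁.ends e).1, Sum.inl (G₁.ends e).2))
                   (fun e => (Sum.inr (G₂.ends e).1, Sum.inr (G₂.ends e).2))
  len := Sum.elim G₁.len G₂.len
  len_pos := by
    rintro (e | e)
    · exact G₁.len_pos e
    · exact G₂.len_pos e

/-- Glue `G₁` and `G₂` along two pairs of vertices (`p₁ ↔ p₂`, `q₁ ↔ q₂`):
the result is the graph `G = G₁ ∪ G₂` with `G₁ ∩ G₂ = {p, q}` (the two pieces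
share exactly these two vertices and no edges). -/
noncomputable def glue2 (G₁ G₂ : WMG) (p₁ q₁ : G₁.V) (p₂ q₂ : G₂.V) : WMG :=
  (G₁.disjUnion G₂).quot (fun x y =>
    (x = Sum.inl p₁ ∧ y = Sum.inr p₂) ∨ (x = Sum.inl q₁ ∧ y = Sum.inr q₂))

/-- Glue `G₁` and `G₂` along three pairs of vertices: the result is the graph
`G = G₁ ∪ G₂` with `G₁ ∩ G₂ = {p, q, s}`. -/
noncomputable def glue3 (G₁ G₂ : WMG) (p₁ q₁ s₁ : G₁.V) (p₂ q₂ s₂ : G₂.V) : WMG :=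
  (G₁.disjUnion G₂).quot (fun x y =>
    (x = Sum.inl p₁ ∧ y = Sum.inr p₂) ∨ (x = Sum.inl q₁ ∧ y = Sum.inr q₂) ∨
    (x = Sum.inl s₁ ∧ y = Sum.inr s₂))

/-- Disjoint union of a finite family of graphs. -/
noncomputable def sigmaGraph {k : ℕ} (G : Fin k → WMG) : WMG where
  V := Σ i, (G i).V
  E := Σ i, (G i).E
  instV := inferInstance
  instE := inferInstance
  ends e := (⟨e.1, ((G e.1).ends e.2).1⟩, ⟨e.1, ((G e.1).ends e.2).2⟩)
  len e := (G e.1).len e.2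
  len_pos e := (G e.1).len_pos e.2

/-- Glue the family `G i` along a common pair of vertices (all the `p i` are
identified together, and all the `q i` are identified together): the result is
`G = ⋃ G_i` with `G_i ∩ G_j = {p, q}` for all `i ≠ j`. -/
noncomputable def glueFam {k : ℕ} (G : Fin k → WMG) (p q : ∀ i, (G i).V) : WMG :=
  (sigmaGraph G).quot (fun x y =>
    (∃ i j, x = ⟨i, p i⟩ ∧ y = ⟨j, p j⟩) ∨ (∃ i j, x = ⟨i, q i⟩ ∧ y = ⟨j, q j⟩))

/-- The cyclic successor on `Fin k`. -/
def finSucc {k : ℕ} (i : Fin k) : Fin k :=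
  ⟨(i.1 + 1) % k, Nat.mod_lt _ (Nat.lt_of_le_of_lt (Nat.zero_le _) i.2)⟩

/-- `CG_k`: replace the `i`-th edge of the cycle `C_k` by the graph `G i`,
identifying `t i` (of `G i`) with `s (i+1)` (of `G (i+1)`), cyclically. -/
noncomputable def cycleGlue {k : ℕ} (G : Fin k → WMG) (s t : ∀ i, (G i).V) : WMG :=
  (sigmaGraph G).quot (fun x y =>
    ∃ i, x = ⟨i, t i⟩ ∧ y = ⟨finSucc i, s (finSucc i)⟩)

/-- Join a new vertex `u` (the vertex `none`) to the vertex `p i` of `H` by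
`a i` parallel unit edges, for each `i`.  The resulting graph `G` has `H = G − u`,
and if `p` is injective with all `a i ≥ 1` then `N_G(u) = {p 1, …, p n}` with
`a i` parallel edges joining `u` to `p i`. -/
noncomputable def cone (H : WMG) {n : ℕ} (p : Fin n → H.V) (a : Fin n → ℕ) : WMG where
  V := Option H.V
  E := H.E ⊕ (Σ i : Fin n, Fin (a i))
  instV := inferInstance
  instE := inferInstance
  ends := Sum.elim (fun e => (some (H.ends e).1, some (H.ends e).2))
                   (fun e => (none, some (p e.1)))
  len := Sum.elim H.len (fun _ => 1)
  len_pos := by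
    rintro (e | e)
    · exact H.len_pos e
    · exact one_pos

/-- The path graph `P_n` on `n` vertices `0, 1, …, n-1`, unit edge lengths. -/
noncomputable def path (n : ℕ) : WMG where
  V := Fin n
  E := Fin (n - 1)
  instV := inferInstance
  instE := inferInstance
  ends i := (⟨i.1, by have := i.2; omega⟩, ⟨i.1 + 1, by have := i.2; omega⟩)
  len _ := 1
  len_pos _ := one_pos

/-- The cycle graph `C_n` on `n` vertices, unit edge lengths. -/
noncomputable def cycle (n : ℕ) : WMG where
  V := Fin n
  E := Fin n
  instV := inferInstance
  instE := inferInstance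
  ends i := (i, finSucc i)
  len _ := 1
  len_pos _ := one_pos

/-- The modified fan graph `F̄an_n`: the path `P_n` together with one new hub
vertex joined to each path vertex by `a` parallel edges. -/
noncomputable def fanGraph (n a : ℕ) : WMG :=
  (path n).cone (fun i : Fin n => i) (fun _ => a)

/-- The modified wheel graph `W̄_n`: the cycle `C_n` together with one new hub
vertex joined to each cycle vertex by `a` parallel edges. -/
noncomputable def wheelGraph (n a : ℕ) : WMG :=
  (cycle n).cone (fun i : Fin n => i) (fun _ => a)

end WMG

/-- The Morgan–Voyce polynomial `B_m(x) = ∑_{k=0}^m C(m+k+1, m−k) x^k`. -/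
noncomputable def morganVoyce (m : ℕ) (x : ℝ) : ℝ :=
  ∑ k ∈ Finset.range (m + 1), (Nat.choose (m + k + 1) (m - k) : ℝ) * x ^ k

/-- The polynomial `W_m(x) = ∑_{k=0}^m ((2m+2)/(m+2+k)) C(m+2+k, m−k) x^k`. -/
noncomputable def wheelPoly (m : ℕ) (x : ℝ) : ℝ :=
  ∑ k ∈ Finset.range (m + 1),
    ((2 * m + 2 : ℝ) / (m + 2 + k : ℝ)) * (Nat.choose (m + 2 + k) (m - k) : ℝ) * x ^ k

/-- The Lucas numbers: `L₀ = 2`, `L₁ = 1`, `L_{m+2} = L_m + L_{m+1}`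
(so `L₂ = 3`). -/
def lucas : ℕ → ℕ
  | 0 => 2
  | 1 => 1
  | n + 2 => lucas n + lucas (n + 1)


open Matrix

def IsPinv {n : Type} [Fintype n] (A B : Matrix n n ℝ) : Prop :=
  A * B * A = A ∧ B * A * B = B ∧ (A * B)ᵀ = A * B ∧ (B * A)ᵀ = B * A

theorem pinv_unique {n : Type} [Fintype n] {A B C : Matrix n n ℝ}
    (hB : IsPinv A B) (hC : IsPinv A C) : B = C := by
  obtain ⟨b1, b2, b3, b4⟩ := hB
  obtain ⟨c1, c2, c3, c4⟩ := hC
  have e1 : Aᵀ = Aᵀ * (A * C) := by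
    conv_lhs => rw [← c1]
    rw [Matrix.transpose_mul, c3]
  have e2 : Aᵀ = (C * A) * Aᵀ := by
    conv_lhs => rw [← c1]
    rw [mul_assoc, Matrix.transpose_mul, c4]
  have h1 : A * B = A * C := by
    calc A * B = Bᵀ * Aᵀ := by rw [← Matrix.transpose_mul, b3]
    _ = Bᵀ * Aᵀ * (A * C) := by conv_lhs => rw [e1, ← mul_assoc]
    _ = (A * B) * (A * C) := by rw [← Matrix.transpose_mul, b3]
    _ = A * C := by rw [← mul_assoc, b1]
  have h2 : B * A = C * A := by
    calc B * A = Aᵀ * Bᵀ := by rw [← Matrix.transpose_mul, b4]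
    _ = (C * A) * (Aᵀ * Bᵀ) := by conv_lhs => rw [e2, mul_assoc]
    _ = (C * A) * (B * A) := by rw [← Matrix.transpose_mul, b4]
    _ = C * A := by rw [mul_assoc, ← mul_assoc A, b1]
  calc B = B * A * B := b2.symm
  _ = C * A * B := by rw [h2]
  _ = C * (A * C) := by rw [mul_assoc, h1]
  _ = C := by rw [← mul_assoc, c2]

theorem exists_pinv_of_symm {n : Type} [Fintype n] (A : Matrix n n ℝ)
    (hA : Aᵀ = A) : ∃ B, IsPinv A B := by
  have hH : A.IsHermitian := by
    rw [Matrix.IsHermitian, Matrix.conjTranspose_eq_transpose_of_trivial]; exact hA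
  set U : Matrix n n ℝ := (Matrix.IsHermitian.eigenvectorUnitary hH : Matrix n n ℝ) with hU
  have hUU : star U * U = 1 := Matrix.mem_unitaryGroup_iff'.mp (Matrix.IsHermitian.eigenvectorUnitary hH).2
  set d : n → ℝ := hH.eigenvalues with hd
  have hspec : A = U * Matrix.diagonal d * star U := by
    have := hH.spectral_theorem
    simpa using this
  have hstar : star U = Uᵀ := by
    ext i j; simp [Matrix.star_apply]
  have hdd : Matrix.diagonal d * Matrix.diagonal (fun i => (d i)⁻¹) * Matrix.diagonal d
      = Matrix.diagonal d := by
    rw [Matrix.diagonal_mul_diagonal, Matrix.diagonal_mul_diagonal]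
    congr with i
    by_cases h : d i = 0 <;> field_simp [h]
  have hdd' : Matrix.diagonal (fun i => (d i)⁻¹) * Matrix.diagonal d * Matrix.diagonal (fun i => (d i)⁻¹)
      = Matrix.diagonal (fun i => (d i)⁻¹) := by
    rw [Matrix.diagonal_mul_diagonal, Matrix.diagonal_mul_diagonal]
    congr with i
    by_cases h : d i = 0 <;> field_simp [h]
  have key : ∀ M N : Matrix n n ℝ, (U * M * star U) * (U * N * star U) = U * (M * N) * star U := by
    intro M N
    calc (U * M * star U) * (U * N * star U) = U * M * (star U * U) * N * star U := by
          simp only [mul_assoc]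
    _ = U * (M * N) * star U := by rw [hUU]; simp only [mul_one, mul_assoc]
  have symmkey : ∀ M : Matrix n n ℝ, Mᵀ = M → (U * M * star U)ᵀ = U * M * star U := by
    intro M hM
    rw [hstar, Matrix.transpose_mul, Matrix.transpose_mul, Matrix.transpose_transpose, hM, mul_assoc]
  refine ⟨U * Matrix.diagonal (fun i => (d i)⁻¹) * star U, ?_, ?_, ?_, ?_⟩
  · rw [hspec, key, key, hdd]
  · rw [hspec, key, key, hdd']
  · rw [hspec, key, Matrix.diagonal_mul_diagonal]
    exact symmkey _ (Matrix.diagonal_transpose _)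
  · rw [hspec, key, Matrix.diagonal_mul_diagonal]
    exact symmkey _ (Matrix.diagonal_transpose _)

theorem mpinv_isPinv {n : Type} [Fintype n] (A : Matrix n n ℝ) (hA : Aᵀ = A) :
    IsPinv A A.mpinv := by
  have h : ∃ B : Matrix n n ℝ,
      A * B * A = A ∧ B * A * B = B ∧ (A * B)ᵀ = A * B ∧ (B * A)ᵀ = B * A :=
    exists_pinv_of_symm A hA
  have hm : A.mpinv = h.choose := by rw [Matrix.mpinv, dif_pos h]
  rw [IsPinv, hm]
  exact h.choose_spec

theorem mpinv_symm {n : Type} [Fintype n] (A : Matrix n n ℝ) (hA : Aᵀ = A) :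
    A.mpinvᵀ = A.mpinv := by
  obtain ⟨b1, b2, b3, b4⟩ := mpinv_isPinv A hA
  set B := A.mpinv with hB
  have ht : IsPinv A Bᵀ := by
    have hab : A * Bᵀ = B * A := by
      calc A * Bᵀ = (B * Aᵀ)ᵀ := by rw [Matrix.transpose_mul, Matrix.transpose_transpose]
      _ = (B * A)ᵀ := by rw [hA]
      _ = B * A := b4
    have hba : Bᵀ * A = A * B := by
      calc Bᵀ * A = (Aᵀ * B)ᵀ := by rw [Matrix.transpose_mul, Matrix.transpose_transpose]
      _ = (A * B)ᵀ := by rw [hA]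
      _ = A * B := b3
    refine ⟨?_, ?_, ?_, ?_⟩
    · calc A * Bᵀ * A = (Aᵀ * B * Aᵀ)ᵀ := by simp [Matrix.transpose_mul, mul_assoc]
      _ = (A * B * A)ᵀ := by rw [hA]
      _ = Aᵀ := by rw [b1]
      _ = A := hA
    · calc Bᵀ * A * Bᵀ = (B * Aᵀ * B)ᵀ := by simp [Matrix.transpose_mul, mul_assoc]
      _ = (B * A * B)ᵀ := by rw [hA]
      _ = Bᵀ := by rw [b2]
    · rw [hab, b4]
    · rw [hba, b3]
  exact pinv_unique ht (mpinv_isPinv A hA)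

theorem pinv_solve {n : Type} [Fintype n] (A : Matrix n n ℝ) (hA : Aᵀ = A)
    (y : n → ℝ) (hker : ∀ z : n → ℝ, A *ᵥ z = 0 → y ⬝ᵥ z = 0) :
    A *ᵥ (A.mpinv *ᵥ y) = y := by
  obtain ⟨b1, b2, b3, b4⟩ := mpinv_isPinv A hA
  set B := A.mpinv with hB
  have hcomm : A * B = B * A := by
    rw [← b3, Matrix.transpose_mul, mpinv_symm A hA, hA]
  set u : n → ℝ := y - (B * A) *ᵥ y with hu
  have hAu : A *ᵥ u = 0 := by
    rw [hu, Matrix.mulVec_sub, Matrix.mulVec_mulVec, ← mul_assoc, b1, sub_self]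
  have h2 : ((B * A) *ᵥ y) ⬝ᵥ u = 0 := by
    calc ((B * A) *ᵥ y) ⬝ᵥ u = u ⬝ᵥ ((B * A) *ᵥ y) := dotProduct_comm _ _
    _ = (u ᵥ* (B * A)) ⬝ᵥ y := Matrix.dotProduct_mulVec _ _ _
    _ = ((B * A)ᵀ *ᵥ u) ⬝ᵥ y := by rw [← Matrix.mulVec_transpose]
    _ = ((B * A) *ᵥ u) ⬝ᵥ y := by rw [b4]
    _ = (B *ᵥ (A *ᵥ u)) ⬝ᵥ y := by rw [Matrix.mulVec_mulVec]
    _ = 0 := by rw [hAu, Matrix.mulVec_zero, zero_dotProduct]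
  have h3 : u ⬝ᵥ u = 0 := by
    nth_rewrite 2 [hu]
    rw [dotProduct_sub, dotProduct_comm u y, hker u hAu,
      dotProduct_comm u ((B * A) *ᵥ y), h2, sub_zero]
  have hu0 : u = 0 := dotProduct_self_eq_zero.mp h3
  have hy : (B * A) *ᵥ y = y := (sub_eq_zero.mp (hu ▸ hu0 : y - (B * A) *ᵥ y = 0)).symm
  rw [Matrix.mulVec_mulVec, hcomm, hy]

namespace WMG

lemma sum_ind_mul {G : WMG} (a : G.V) (z : G.V → ℝ) :
    ∑ u, ind u a * z u = z a := by
  simp [WMG.ind, ite_mul]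

lemma sum_ind_sub_mul {G : WMG} (a b : G.V) (z : G.V → ℝ) :
    ∑ u, (ind u a - ind u b) * z u = z a - z b := by
  simp only [sub_mul, Finset.sum_sub_distrib, sum_ind_mul]

lemma lap_mulVec (H : WMG) (z : H.V → ℝ) (v : H.V) :
    (H.lap *ᵥ z) v = ∑ e, (H.len e)⁻¹ *
      ((ind v (H.ends e).1 - ind v (H.ends e).2) * (z (H.ends e).1 - z (H.ends e).2)) := by
  simp only [Matrix.mulVec, dotProduct, WMG.lap, Matrix.sum_apply, Matrix.smul_apply,
    Matrix.of_apply, smul_eq_mul, Finset.sum_mul]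
  rw [Finset.sum_comm]
  refine Finset.sum_congr rfl fun e _ => ?_
  rw [← sum_ind_sub_mul (G := H) (H.ends e).1 (H.ends e).2 z, Finset.mul_sum, Finset.mul_sum]
  exact Finset.sum_congr rfl fun u _ => by ring

lemma lap_quad (H : WMG) (z : H.V → ℝ) :
    z ⬝ᵥ (H.lap *ᵥ z) = ∑ e, (H.len e)⁻¹ *
      ((z (H.ends e).1 - z (H.ends e).2) * (z (H.ends e).1 - z (H.ends e).2)) := by
  simp only [dotProduct]
  have : ∀ v, z v * (H.lap *ᵥ z) v = ∑ e, (H.len e)⁻¹ *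
      (z v * (ind v (H.ends e).1 - ind v (H.ends e).2) * (z (H.ends e).1 - z (H.ends e).2)) := by
    intro v
    rw [lap_mulVec, Finset.mul_sum]
    exact Finset.sum_congr rfl fun e _ => by ring
  simp only [this]
  rw [Finset.sum_comm]
  refine Finset.sum_congr rfl fun e _ => ?_
  have h1 : ∑ v, (H.len e)⁻¹ *
      (z v * (ind v (H.ends e).1 - ind v (H.ends e).2) * (z (H.ends e).1 - z (H.ends e).2))
      = (H.len e)⁻¹ * ((∑ v, (ind v (H.ends e).1 - ind v (H.ends e).2) * z v) *
        (z (H.ends e).1 - z (H.ends e).2)) := by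
    rw [Finset.sum_mul, Finset.mul_sum]
    exact Finset.sum_congr rfl fun v _ => by ring
  rw [h1, sum_ind_sub_mul]

lemma lap_symm (H : WMG) : H.lapᵀ = H.lap := by
  ext i j
  simp only [WMG.lap, Matrix.transpose_apply, Matrix.sum_apply, Matrix.smul_apply,
    Matrix.of_apply, smul_eq_mul]
  exact Finset.sum_congr rfl fun e _ => by ring

lemma edge_const_of_quad_zero (H : WMG) (z : H.V → ℝ)
    (h : z ⬝ᵥ (H.lap *ᵥ z) = 0) (e : H.E) : z (H.ends e).1 = z (H.ends e).2 := by
  rw [lap_quad] at h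
  have h0 : ∀ e ∈ Finset.univ (α := H.E), (0:ℝ) ≤ (H.len e)⁻¹ *
      ((z (H.ends e).1 - z (H.ends e).2) * (z (H.ends e).1 - z (H.ends e).2)) := by
    intro e _
    exact mul_nonneg (inv_nonneg.mpr (H.len_pos e).le) (mul_self_nonneg _)
  have := (Finset.sum_eq_zero_iff_of_nonneg h0).mp h e (Finset.mem_univ e)
  have hlen : (H.len e)⁻¹ ≠ 0 := inv_ne_zero (H.len_pos e).ne'
  have h2 : (z (H.ends e).1 - z (H.ends e).2) * (z (H.ends e).1 - z (H.ends e).2) = 0 := by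
    rcases mul_eq_zero.mp this with h' | h'
    · exact absurd h' hlen
    · exact h'
  have := mul_self_eq_zero.mp h2
  linarith

lemma lap_mulVec_zero_of_edges (H : WMG) (z : H.V → ℝ)
    (h : ∀ e, z (H.ends e).1 = z (H.ends e).2) : H.lap *ᵥ z = 0 := by
  funext v
  rw [lap_mulVec]
  simp only [Pi.zero_apply]
  refine Finset.sum_eq_zero fun e _ => ?_
  rw [h e, sub_self, mul_zero, mul_zero]

lemma ker_const (H : WMG) (hH : H.Connected) (z : H.V → ℝ)
    (hz : H.lap *ᵥ z = 0) (u v : H.V) : z u = z v := by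
  have hq : z ⬝ᵥ (H.lap *ᵥ z) = 0 := by rw [hz, dotProduct_zero]
  have hedge := edge_const_of_quad_zero H z hq
  have hadj : ∀ a b : H.V, H.Adj a b → z a = z b := by
    rintro a b ⟨e, h | h⟩
    · have := hedge e; rw [h] at this; exact this
    · have := hedge e; rw [h] at this; exact this.symm
  induction hH.2 u v with
  | refl => rfl
  | tail _ hbc ih => exact ih.trans (hadj _ _ hbc)

lemma lap_solve (H : WMG) (hH : H.Connected) (y : H.V → ℝ) (hy : ∑ v, y v = 0) :
    H.lap *ᵥ (H.lap.mpinv *ᵥ y) = y := by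
  apply pinv_solve H.lap (lap_symm H) y
  intro z hz
  obtain ⟨v₀⟩ := hH.1
  have hc : ∀ v, z v = z v₀ := fun v => ker_const H hH z hz v v₀
  calc y ⬝ᵥ z = ∑ v, y v * z v := rfl
  _ = ∑ v, y v * z v₀ := Finset.sum_congr rfl fun v _ => by rw [hc v]
  _ = (∑ v, y v) * z v₀ := by rw [Finset.sum_mul]
  _ = 0 := by rw [hy, zero_mul]

lemma mpinv_mulVec_diff (H : WMG) (a b v : H.V) :
    (H.lap.mpinv *ᵥ (fun u => ind u a - ind u b)) v
      = H.lap.mpinv v a - H.lap.mpinv v b := by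
  simp only [Matrix.mulVec, dotProduct]
  calc ∑ u, H.lap.mpinv v u * (ind u a - ind u b)
      = ∑ u, (ind u a - ind u b) * H.lap.mpinv v u :=
        Finset.sum_congr rfl fun u _ => by ring
  _ = _ := sum_ind_sub_mul a b _

lemma sum_ind_sub (H : WMG) (a b : H.V) : ∑ v : H.V, (ind v a - ind v b) = 0 := by
  have := sum_ind_sub_mul (G := H) a b (fun _ => 1)
  simpa using this

end WMG

/-- **Explicit Rayleigh's Shorting Law.**  For a finite connected weighted
graph `G` and vertices `p ≠ q`, `s`, `t`:
`r(s,t) = r_{G_{pq}}(s,t) + (1/r(p,q)) (j_p(q,s) - j_p(q,t))²`; in particular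
`r(s,t) ≥ r_{G_{pq}}(s,t)` with equality iff `j_p(q,s) = j_p(q,t)`. -/
theorem explicit_rayleigh_shorting_law (G : WMG) (hG : G.Connected)
    (p q s t : G.V) (hpq : p ≠ q) :
    G.res s t = (G.ident2 p q).res (G.ident2Map p q s) (G.ident2Map p q t) +
        (1 / G.res p q) * (G.volt p q s - G.volt p q t) ^ 2 ∧
    (G.ident2 p q).res (G.ident2Map p q s) (G.ident2Map p q t) ≤ G.res s t ∧
    (G.res s t = (G.ident2 p q).res (G.ident2Map p q s) (G.ident2Map p q t) ↔
      G.volt p q s = G.volt p q t) := by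
  classical
  have hsymm : G.lapᵀ = G.lap := WMG.lap_symm G
  have hBsym : ∀ a b, G.lap.mpinv a b = G.lap.mpinv b a := by
    intro a b
    have h := congrFun (congrFun (mpinv_symm G.lap hsymm) b) a
    rwa [Matrix.transpose_apply] at h
  set f : G.V → ℝ := G.lap.mpinv *ᵥ (fun u => WMG.ind u s - WMG.ind u t) with hf
  set g : G.V → ℝ := G.lap.mpinv *ᵥ (fun u => WMG.ind u p - WMG.ind u q) with hg
  have hLf : G.lap *ᵥ f = (fun u => WMG.ind u s - WMG.ind u t) := by
    rw [hf]; exact WMG.lap_solve G hG _ (WMG.sum_ind_sub G s t)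
  have hLg : G.lap *ᵥ g = (fun u => WMG.ind u p - WMG.ind u q) := by
    rw [hg]; exact WMG.lap_solve G hG _ (WMG.sum_ind_sub G p q)
  have hfv : ∀ v, f v = G.lap.mpinv v s - G.lap.mpinv v t := by
    intro v; rw [hf]; exact WMG.mpinv_mulVec_diff G s t v
  have hgv : ∀ v, g v = G.lap.mpinv v p - G.lap.mpinv v q := by
    intro v; rw [hg]; exact WMG.mpinv_mulVec_diff G p q v
  have hrpq : G.res p q = g p - g q := by
    simp only [WMG.res]
    rw [hgv p, hgv q, hBsym q p]; ring
  have hdotg : g ⬝ᵥ (G.lap *ᵥ g) = g p - g q := by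
    rw [hLg, dotProduct_comm]
    show ∑ u, (WMG.ind u p - WMG.ind u q) * g u = g p - g q
    exact WMG.sum_ind_sub_mul p q g
  have hrpos : 0 < G.res p q := by
    have hnn : 0 ≤ g ⬝ᵥ (G.lap *ᵥ g) := by
      rw [WMG.lap_quad]
      exact Finset.sum_nonneg fun e _ =>
        mul_nonneg (inv_nonneg.mpr (G.len_pos e).le) (mul_self_nonneg _)
    have hne : g ⬝ᵥ (G.lap *ᵥ g) ≠ 0 := by
      intro h0
      have hz : G.lap *ᵥ g = 0 :=
        WMG.lap_mulVec_zero_of_edges G g (WMG.edge_const_of_quad_zero G g h0)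
      rw [hLg] at hz
      have hp := congrFun hz p
      simp [WMG.ind, hpq] at hp
    rw [hrpq, ← hdotg]
    exact lt_of_le_of_ne hnn (Ne.symm hne)
  set lam : ℝ := (f p - f q) / G.res p q with hlam
  have hnegq : g p - g q ≠ 0 := by rw [← hrpq]; exact hrpos.ne'
  have hlamgp : lam * (g p - g q) = f p - f q := by
    rw [hlam, hrpq, div_mul_cancel₀ _ hnegq]
  set x : G.V → ℝ := fun v => f v - lam * g v with hx
  have hxpq : x p = x q := by
    simp only [hx]
    linear_combination -hlamgp
  have hLx : G.lap *ᵥ x = fun v =>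
      (WMG.ind v s - WMG.ind v t) - lam * (WMG.ind v p - WMG.ind v q) := by
    have hxd : x = f - lam • g := by
      funext v; simp [hx]
    rw [hxd, Matrix.mulVec_sub, Matrix.mulVec_smul, hLf, hLg]
    funext v
    simp
  -- quotient facts
  have hends : ∀ e : G.E, (G.ident2 p q).ends e
      = (G.ident2Map p q (G.ends e).1, G.ident2Map p q (G.ends e).2) := fun e => rfl
  have hlen : ∀ e : G.E, (G.ident2 p q).len e = G.len e := fun e => rfl
  have hπpq : G.ident2Map p q p = G.ident2Map p q q := Quot.sound ⟨rfl, rfl⟩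
  have hG'conn : (G.ident2 p q).Connected := by
    constructor
    · exact ⟨G.ident2Map p q p⟩
    · intro u' v'
      obtain ⟨u, rfl⟩ := Quot.exists_rep u'
      obtain ⟨v, rfl⟩ := Quot.exists_rep v'
      refine Relation.ReflTransGen.lift (G.ident2Map p q) ?_ u v (hG.2 u v)
      rintro a b ⟨e, h | h⟩
      · exact ⟨e, Or.inl (by rw [hends e, h])⟩
      · exact ⟨e, Or.inr (by rw [hends e, h])⟩
  obtain ⟨x', hx'mk⟩ : ∃ x' : (G.ident2 p q).V → ℝ, ∀ v, x' (G.ident2Map p q v) = x v :=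
    ⟨Quot.lift x (fun a b hab => by rw [hab.1, hab.2, hxpq]), fun v => rfl⟩
  have hkey : ∀ (a : G.V) (w : (G.ident2 p q).V),
      ∑ v : G.V, (if G.ident2Map p q v = w then (1:ℝ) else 0) * WMG.ind v a
        = WMG.ind w (G.ident2Map p q a) := by
    intro a w
    have h1 : ∀ v : G.V, (if G.ident2Map p q v = w then (1:ℝ) else 0) * WMG.ind v a
        = if v = a then (if G.ident2Map p q v = w then (1:ℝ) else 0) else 0 := by
      intro v
      by_cases h2 : v = a <;> simp [WMG.ind, h2]
    simp only [h1]
    rw [Finset.sum_ite_eq' Finset.univ a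
      (fun v => if G.ident2Map p q v = w then (1:ℝ) else 0)]
    simp only [Finset.mem_univ, if_true]
    by_cases h : G.ident2Map p q a = w
    · subst h; simp [WMG.ind]
    · simp [WMG.ind, h, Ne.symm h]
  have hquot : ∀ w : (G.ident2 p q).V, ((G.ident2 p q).lap *ᵥ x') w
      = ∑ v : G.V, (if G.ident2Map p q v = w then (1:ℝ) else 0) * ((G.lap *ᵥ x) v) := by
    intro w
    rw [WMG.lap_mulVec]
    have hRHS : ∀ v : G.V, (if G.ident2Map p q v = w then (1:ℝ) else 0) * ((G.lap *ᵥ x) v)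
        = ∑ e : G.E, (G.len e)⁻¹ * ((if G.ident2Map p q v = w then (1:ℝ) else 0)
            * (WMG.ind v (G.ends e).1 - WMG.ind v (G.ends e).2)
            * (x (G.ends e).1 - x (G.ends e).2)) := by
      intro v
      rw [WMG.lap_mulVec, Finset.mul_sum]
      exact Finset.sum_congr rfl fun e _ => by ring
    simp only [hRHS]
    rw [Finset.sum_comm]
    refine Finset.sum_congr rfl fun e _ => ?_
    erw [hends e, hlen e]
    simp only [hx'mk]
    rw [← hkey (G.ends e).1 w, ← hkey (G.ends e).2 w]
    rw [← Finset.sum_sub_distrib, Finset.sum_mul, Finset.mul_sum]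
    exact Finset.sum_congr rfl fun v _ => by ring
  have hLx' : (G.ident2 p q).lap *ᵥ x' = fun w =>
      WMG.ind w (G.ident2Map p q s) - WMG.ind w (G.ident2Map p q t) := by
    funext w
    rw [hquot w]
    simp only [hLx]
    have expand : ∀ v : G.V, (if G.ident2Map p q v = w then (1:ℝ) else 0) *
        ((WMG.ind v s - WMG.ind v t) - lam * (WMG.ind v p - WMG.ind v q))
        = ((if G.ident2Map p q v = w then (1:ℝ) else 0) * WMG.ind v s
            - (if G.ident2Map p q v = w then (1:ℝ) else 0) * WMG.ind v t)
          - lam * ((if G.ident2Map p q v = w then (1:ℝ) else 0) * WMG.ind v p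
            - (if G.ident2Map p q v = w then (1:ℝ) else 0) * WMG.ind v q) := by
      intro v; ring
    simp only [expand]
    rw [Finset.sum_sub_distrib, Finset.sum_sub_distrib, ← Finset.mul_sum,
      Finset.sum_sub_distrib, hkey s w, hkey t w, hkey p w, hkey q w, hπpq,
      sub_self, mul_zero, sub_zero]
  set f' : (G.ident2 p q).V → ℝ := (G.ident2 p q).lap.mpinv *ᵥ
    (fun w => WMG.ind w (G.ident2Map p q s) - WMG.ind w (G.ident2Map p q t)) with hf'
  have hLf' : (G.ident2 p q).lap *ᵥ f' = fun w =>
      WMG.ind w (G.ident2Map p q s) - WMG.ind w (G.ident2Map p q t) := by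
    rw [hf']
    exact WMG.lap_solve _ hG'conn _ (WMG.sum_ind_sub (G.ident2 p q) _ _)
  have hB'sym : ∀ a b, (G.ident2 p q).lap.mpinv a b = (G.ident2 p q).lap.mpinv b a := by
    intro a b
    have h := congrFun (congrFun (mpinv_symm _ (WMG.lap_symm (G.ident2 p q))) b) a
    rwa [Matrix.transpose_apply] at h
  have hdiffker : (G.ident2 p q).lap *ᵥ (x' - f') = 0 := by
    rw [Matrix.mulVec_sub, hLx', hLf', sub_self]
  have hconst := WMG.ker_const _ hG'conn _ hdiffker
    (G.ident2Map p q s) (G.ident2Map p q t)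
  simp only [Pi.sub_apply] at hconst
  have hf'v : ∀ w, f' w = (G.ident2 p q).lap.mpinv w (G.ident2Map p q s)
      - (G.ident2 p q).lap.mpinv w (G.ident2Map p q t) := by
    intro w; rw [hf']; exact WMG.mpinv_mulVec_diff (G.ident2 p q) _ _ w
  have hres' : (G.ident2 p q).res (G.ident2Map p q s) (G.ident2Map p q t)
      = f' (G.ident2Map p q s) - f' (G.ident2Map p q t) := by
    simp only [WMG.res]
    rw [hf'v, hf'v, hB'sym (G.ident2Map p q t) (G.ident2Map p q s)]
    ring
  have hxst : x s - x t = f' (G.ident2Map p q s) - f' (G.ident2Map p q t) := by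
    have h1 := hx'mk s
    have h2 := hx'mk t
    linarith [hconst]
  have hfst : f s - f t = G.res s t := by
    simp only [WMG.res]
    rw [hfv s, hfv t, hBsym t s]; ring
  have hgst : g s - g t = f p - f q := by
    rw [hgv s, hgv t, hfv p, hfv q, hBsym s p, hBsym s q, hBsym t p, hBsym t q]
    ring
  have hDj : G.volt p q s - G.volt p q t = -(f p - f q) := by
    simp only [WMG.volt]
    rw [hfv p, hfv q]
    ring
  have hres'val : (G.ident2 p q).res (G.ident2Map p q s) (G.ident2Map p q t)
      = G.res s t - (f p - f q) * (f p - f q) / G.res p q := by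
    have hgoal : lam * (g s - g t) = (f p - f q) * (f p - f q) / G.res p q := by
      rw [hlam, hgst]; ring
    have e1 : x s - x t = G.res s t - (f p - f q) * (f p - f q) / G.res p q := by
      simp only [hx]
      rw [← hfst]
      linear_combination -hgoal
    rw [hres', ← hxst, e1]
  have hmain : G.res s t = (G.ident2 p q).res (G.ident2Map p q s) (G.ident2Map p q t) +
      (1 / G.res p q) * (G.volt p q s - G.volt p q t) ^ 2 := by
    rw [hres'val, hDj]
    field_simp
    ring
  refine ⟨hmain, ?_, ?_⟩
  · have h2 : 0 ≤ (1 / G.res p q) * (G.volt p q s - G.volt p q t) ^ 2 := by positivity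
    linarith [hmain]
  · constructor
    · intro he
      have hT : (1 / G.res p q) * (G.volt p q s - G.volt p q t) ^ 2 = 0 := by linarith [hmain]
      have h1r : 1 / G.res p q ≠ 0 := one_div_ne_zero hrpos.ne'
      have h2 := (mul_eq_zero.mp hT).resolve_left h1r
      exact sub_eq_zero.mp (sq_eq_zero_iff.mp h2)
    · intro he
      rw [hmain, he]
      simp
end

section
/- Let G be a finite connected weighted graph and let p, q, s, t, u be vertices of G with p ≠ q. Then j_u(t,s) = j_u^{G_{pq}}(t,s) + (1/r(p,q))·( j_p(q,u) − j_p(q,t) )·( j_p(q,u) − j_p(q,s) ). -/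
open scoped Classical

namespace VoltAux

open Matrix Finset

/-! ### Moore–Penrose uniqueness -/

def IsMP {n : Type} [Fintype n] (A B : Matrix n n ℝ) : Prop :=
  A * B * A = A ∧ B * A * B = B ∧ (A * B)ᵀ = A * B ∧ (B * A)ᵀ = B * A

lemma isMP_unique {n : Type} [Fintype n] {A B C : Matrix n n ℝ}
    (hB : IsMP A B) (hC : IsMP A C) : B = C := by
  obtain ⟨hB1, hB2, hB3, hB4⟩ := hB
  obtain ⟨hC1, hC2, hC3, hC4⟩ := hC
  have hAT : Aᵀ = Aᵀ * (A * C) := by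
    conv_lhs => rw [← hC1]
    rw [Matrix.transpose_mul, hC3]
  have hB' : B = B * Bᵀ * Aᵀ := by
    calc B = B * A * B := hB2.symm
      _ = B * (A * B) := by rw [mul_assoc]
      _ = B * (A * B)ᵀ := by rw [hB3]
      _ = B * (Bᵀ * Aᵀ) := by rw [Matrix.transpose_mul]
      _ = B * Bᵀ * Aᵀ := by rw [mul_assoc]
  have e1 : B = B * (A * C) := by
    calc B = B * Bᵀ * Aᵀ := hB'
      _ = B * Bᵀ * (Aᵀ * (A * C)) := by rw [← hAT]
      _ = B * Bᵀ * Aᵀ * (A * C) := by simp only [mul_assoc]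
      _ = B * (A * C) := by rw [← hB']
  have hAT2 : Aᵀ = (B * A) * Aᵀ := by
    conv_lhs => rw [← hB1]
    rw [mul_assoc, Matrix.transpose_mul, hB4]
  have hC' : C = Aᵀ * Cᵀ * C := by
    calc C = C * A * C := hC2.symm
      _ = (C * A)ᵀ * C := by rw [hC4]
      _ = (Aᵀ * Cᵀ) * C := by rw [Matrix.transpose_mul]
  have e2 : C = B * (A * C) := by
    calc C = Aᵀ * Cᵀ * C := hC'
      _ = ((B * A) * Aᵀ) * Cᵀ * C := by rw [← hAT2]
      _ = (B * A) * (Aᵀ * Cᵀ * C) := by simp only [mul_assoc]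
      _ = (B * A) * C := by rw [← hC']
      _ = B * (A * C) := by rw [mul_assoc]
  exact e1.trans e2.symm

lemma mpinv_eq {n : Type} [Fintype n] {A B : Matrix n n ℝ} (hB : IsMP A B) :
    A.mpinv = B := by
  have hex : ∃ B : Matrix n n ℝ,
      A * B * A = A ∧ B * A * B = B ∧ (A * B)ᵀ = A * B ∧ (B * A)ᵀ = B * A := ⟨B, hB⟩
  rw [Matrix.mpinv, dif_pos hex]
  exact isMP_unique hex.choose_spec hB

lemma dot_mulVec_symm {n : Type} [Fintype n] {K : Matrix n n ℝ} (h : Kᵀ = K)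
    (v w : n → ℝ) : v ⬝ᵥ (K *ᵥ w) = w ⬝ᵥ (K *ᵥ v) := by
  rw [Matrix.dotProduct_mulVec, ← Matrix.mulVec_transpose, h, dotProduct_comm]

/-! ### Indicator sums -/

lemma sum_ind_mul {α : Type} [Fintype α] (a : α) (x : α → ℝ) :
    (∑ v, WMG.ind v a * x v) = x a := by
  simp [WMG.ind, ite_mul]

lemma sum_mul_ind {α : Type} [Fintype α] (a : α) (x : α → ℝ) :
    (∑ v, x v * WMG.ind v a) = x a := by
  simp [WMG.ind, mul_ite]

lemma sum_ind_mul' {α : Type} [Fintype α] (b : α) (y : α → ℝ) :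
    (∑ a, WMG.ind b a * y a) = y b := by
  simp [WMG.ind, ite_mul]

lemma sum_ind_comp {α β : Type} [Fintype α] (h : α → β) (b : α) (a' : β) :
    (∑ v, WMG.ind (h v) a' * WMG.ind v b) = WMG.ind a' (h b) := by
  simp [WMG.ind, mul_ite, eq_comm]

/-! ### Laplacian basics -/

noncomputable def dv (G : WMG) (e : G.E) : G.V → ℝ :=
  fun v => WMG.ind v (G.ends e).1 - WMG.ind v (G.ends e).2

noncomputable def chi (G : WMG) (a b : G.V) : G.V → ℝ :=
  fun v => WMG.ind v a - WMG.ind v b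

lemma dv_dot (G : WMG) (e : G.E) (x : G.V → ℝ) :
    (∑ v, dv G e v * x v) = x (G.ends e).1 - x (G.ends e).2 := by
  simp [dv, sub_mul, Finset.sum_sub_distrib, sum_ind_mul]

lemma sum_dv (G : WMG) (e : G.E) : (∑ v, dv G e v) = 0 := by
  simp [dv, Finset.sum_sub_distrib, WMG.ind]

lemma chi_dot (G : WMG) (a b : G.V) (x : G.V → ℝ) :
    chi G a b ⬝ᵥ x = x a - x b := by
  simp [dotProduct, chi, sub_mul, Finset.sum_sub_distrib, sum_ind_mul]

lemma sum_chi (G : WMG) (a b : G.V) : (∑ v, chi G a b v) = 0 := by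
  simp [chi, Finset.sum_sub_distrib, WMG.ind]

lemma lap_apply (G : WMG) (u v : G.V) :
    G.lap u v = ∑ e, (G.len e)⁻¹ * (dv G e u * dv G e v) := by
  rw [WMG.lap, Matrix.sum_apply]
  simp [dv]

lemma lap_symm (G : WMG) : G.lapᵀ = G.lap := by
  ext u v
  rw [Matrix.transpose_apply, lap_apply, lap_apply]
  exact Finset.sum_congr rfl fun e _ => by ring

lemma lap_mulVec (G : WMG) (x : G.V → ℝ) (u : G.V) :
    (G.lap *ᵥ x) u
      = ∑ e, (G.len e)⁻¹ * (dv G e u * (x (G.ends e).1 - x (G.ends e).2)) := by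
  calc (G.lap *ᵥ x) u = ∑ v, G.lap u v * x v := rfl
    _ = ∑ v, ∑ e, (G.len e)⁻¹ * (dv G e u * dv G e v) * x v := by
        simp only [lap_apply, Finset.sum_mul]
    _ = ∑ e, ∑ v, (G.len e)⁻¹ * (dv G e u * dv G e v) * x v := Finset.sum_comm
    _ = ∑ e, (G.len e)⁻¹ * (dv G e u * (x (G.ends e).1 - x (G.ends e).2)) := by
        refine Finset.sum_congr rfl fun e _ => ?_
        trans ((G.len e)⁻¹ * dv G e u) * ∑ v, dv G e v * x v
        · rw [Finset.mul_sum]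
          exact Finset.sum_congr rfl fun v _ => by ring
        · rw [dv_dot]; ring

lemma quad_lap (G : WMG) (x : G.V → ℝ) :
    x ⬝ᵥ (G.lap *ᵥ x)
      = ∑ e, (G.len e)⁻¹ * (x (G.ends e).1 - x (G.ends e).2) ^ 2 := by
  calc x ⬝ᵥ (G.lap *ᵥ x)
      = ∑ u, x u * ∑ e, (G.len e)⁻¹ * (dv G e u * (x (G.ends e).1 - x (G.ends e).2)) := by
        simp [dotProduct, lap_mulVec]
    _ = ∑ u, ∑ e, x u * ((G.len e)⁻¹ * (dv G e u * (x (G.ends e).1 - x (G.ends e).2))) := by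
        simp [Finset.mul_sum]
    _ = ∑ e, ∑ u, x u * ((G.len e)⁻¹ * (dv G e u * (x (G.ends e).1 - x (G.ends e).2))) :=
        Finset.sum_comm
    _ = ∑ e, (G.len e)⁻¹ * (x (G.ends e).1 - x (G.ends e).2) ^ 2 := by
        refine Finset.sum_congr rfl fun e _ => ?_
        have h : ∑ u, x u * ((G.len e)⁻¹ * (dv G e u * (x (G.ends e).1 - x (G.ends e).2)))
            = ((G.len e)⁻¹ * (x (G.ends e).1 - x (G.ends e).2)) * ∑ u, dv G e u * x u := by
          rw [Finset.mul_sum]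
          exact Finset.sum_congr rfl fun u _ => by ring
        rw [h, dv_dot]
        ring

lemma eq_on_reach (G : WMG) (x : G.V → ℝ)
    (h : ∀ e, x (G.ends e).1 = x (G.ends e).2) {a b : G.V} (hr : G.Reach a b) :
    x a = x b := by
  induction hr with
  | refl => rfl
  | tail _ hadj ih =>
      refine ih.trans ?_
      obtain ⟨e, he | he⟩ := hadj
      · have := h e; rw [he] at this; exact this
      · have := h e; rw [he] at this; exact this.symm

/-! ### The projection matrix and invertibility of `L + P` -/

noncomputable def Pm (G : WMG) : Matrix G.V G.V ℝ :=
  Matrix.of fun _ _ => (Fintype.card G.V : ℝ)⁻¹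

lemma Pm_mulVec (G : WMG) (x : G.V → ℝ) (u : G.V) :
    (Pm G *ᵥ x) u = (Fintype.card G.V : ℝ)⁻¹ * ∑ v, x v := by
  simp [Pm, Matrix.mulVec, dotProduct, Finset.mul_sum]

lemma Pm_mulVec_zero (G : WMG) (x : G.V → ℝ) (hx : (∑ v, x v) = 0) :
    Pm G *ᵥ x = 0 := by
  funext u; rw [Pm_mulVec, hx]; simp

lemma quad_Pm (G : WMG) (x : G.V → ℝ) :
    x ⬝ᵥ (Pm G *ᵥ x) = (Fintype.card G.V : ℝ)⁻¹ * (∑ v, x v) ^ 2 := by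
  calc x ⬝ᵥ (Pm G *ᵥ x)
      = ∑ u, x u * ((Fintype.card G.V : ℝ)⁻¹ * ∑ v, x v) := by
        simp [dotProduct, Pm_mulVec]
    _ = (∑ u, x u) * ((Fintype.card G.V : ℝ)⁻¹ * ∑ v, x v) := by
        rw [← Finset.sum_mul]
    _ = (Fintype.card G.V : ℝ)⁻¹ * (∑ v, x v) ^ 2 := by ring

lemma quadA_zero (G : WMG) (hG : G.Connected) (x : G.V → ℝ)
    (h : x ⬝ᵥ ((G.lap + Pm G) *ᵥ x) = 0) : x = 0 := by
  obtain ⟨⟨a₀⟩, hreach⟩ := hG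
  have hsplit : x ⬝ᵥ (G.lap *ᵥ x) + x ⬝ᵥ (Pm G *ᵥ x) = 0 := by
    rw [← dotProduct_add, ← Matrix.add_mulVec]; exact h
  have h1 : (0:ℝ) ≤ x ⬝ᵥ (G.lap *ᵥ x) := by
    rw [quad_lap]
    exact Finset.sum_nonneg fun e _ =>
      mul_nonneg (inv_nonneg.mpr (G.len_pos e).le) (sq_nonneg _)
  have hcard : (0:ℝ) < (Fintype.card G.V : ℝ) := by
    exact_mod_cast Fintype.card_pos_iff.mpr ⟨a₀⟩
  have h2 : (0:ℝ) ≤ x ⬝ᵥ (Pm G *ᵥ x) := by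
    rw [quad_Pm]
    exact mul_nonneg (inv_nonneg.mpr (Nat.cast_nonneg _)) (sq_nonneg _)
  have hq1 : x ⬝ᵥ (G.lap *ᵥ x) = 0 := by linarith
  have hq2 : x ⬝ᵥ (Pm G *ᵥ x) = 0 := by linarith
  -- from hq1, x is constant
  have hedge : ∀ e, x (G.ends e).1 = x (G.ends e).2 := by
    rw [quad_lap] at hq1
    have := (Finset.sum_eq_zero_iff_of_nonneg (fun e _ =>
      mul_nonneg (inv_nonneg.mpr (G.len_pos e).le) (sq_nonneg _))).mp hq1
    intro e
    have he := this e (Finset.mem_univ e)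
    have hlen : (0:ℝ) < (G.len e)⁻¹ := inv_pos.mpr (G.len_pos e)
    have : (x (G.ends e).1 - x (G.ends e).2) ^ 2 = 0 := by
      rcases mul_eq_zero.mp he with h' | h'
      · exact absurd h' (ne_of_gt hlen)
      · exact h'
    have h0 : x (G.ends e).1 - x (G.ends e).2 = 0 :=
      pow_eq_zero_iff (two_ne_zero) |>.mp this
    linarith
  have hconst : ∀ v, x v = x a₀ := fun v => eq_on_reach G x hedge (hreach v a₀)
  have hsum : (∑ v, x v) = 0 := by
    rw [quad_Pm] at hq2
    have hinv : (0:ℝ) < (Fintype.card G.V : ℝ)⁻¹ := inv_pos.mpr hcard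
    have hsq : ((∑ v, x v) ^ 2) = 0 := by
      rcases mul_eq_zero.mp hq2 with h' | h'
      · exact absurd h' (ne_of_gt hinv)
      · exact h'
    exact pow_eq_zero_iff (two_ne_zero) |>.mp hsq
  have hx0 : x a₀ = 0 := by
    have : (∑ v, x v) = (Fintype.card G.V : ℝ) * x a₀ := by
      rw [Finset.sum_congr rfl fun v _ => hconst v, Finset.sum_const, nsmul_eq_mul,
        Finset.card_univ]
    rw [this] at hsum
    rcases mul_eq_zero.mp hsum with h' | h'
    · exact absurd h' (ne_of_gt hcard)
    · exact h'
  funext v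
  rw [hconst v, hx0]; rfl

lemma A_isUnit (G : WMG) (hG : G.Connected) : IsUnit (G.lap + Pm G).det := by
  rw [isUnit_iff_ne_zero]
  intro hdet
  obtain ⟨v, hv, hAv⟩ := (Matrix.exists_mulVec_eq_zero_iff).mpr hdet
  exact hv (quadA_zero G hG v (by rw [hAv, dotProduct_zero]))

/-! ### The explicit pseudoinverse -/

noncomputable def Bm (G : WMG) : Matrix G.V G.V ℝ := (G.lap + Pm G)⁻¹ - Pm G

lemma lap_rowsum (G : WMG) (u : G.V) : (∑ v, G.lap u v) = 0 := by
  simp only [lap_apply]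
  rw [Finset.sum_comm]
  refine Finset.sum_eq_zero fun e _ => ?_
  have h : (∑ v, (G.len e)⁻¹ * (dv G e u * dv G e v))
      = ((G.len e)⁻¹ * dv G e u) * ∑ v, dv G e v := by
    rw [Finset.mul_sum]
    exact Finset.sum_congr rfl fun v _ => by ring
  rw [h, sum_dv, mul_zero]

lemma lap_mul_Pm (G : WMG) : G.lap * Pm G = 0 := by
  ext u a
  rw [Matrix.mul_apply]
  have h : (∑ v, G.lap u v * Pm G v a) = (∑ v, G.lap u v) * (Fintype.card G.V : ℝ)⁻¹ := by
    rw [Finset.sum_mul]; rfl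
  rw [h, lap_rowsum, zero_mul]; rfl

lemma Pm_mul_lap (G : WMG) : Pm G * G.lap = 0 := by
  have h := congrArg Matrix.transpose (lap_mul_Pm G)
  rw [Matrix.transpose_mul, lap_symm] at h
  have hPt : (Pm G)ᵀ = Pm G := rfl
  rw [hPt] at h
  simpa using h

lemma Pm_mul_Pm (G : WMG) (hG : G.Connected) : Pm G * Pm G = Pm G := by
  obtain ⟨⟨a₀⟩, -⟩ := hG
  have hcard : (0:ℝ) < (Fintype.card G.V : ℝ) := by
    exact_mod_cast Fintype.card_pos_iff.mpr ⟨a₀⟩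
  ext u a
  rw [Matrix.mul_apply]
  show (∑ _v : G.V, (Fintype.card G.V : ℝ)⁻¹ * (Fintype.card G.V : ℝ)⁻¹)
      = (Fintype.card G.V : ℝ)⁻¹
  rw [Finset.sum_const, Finset.card_univ, nsmul_eq_mul]
  field_simp

lemma isMP_Bm (G : WMG) (hG : G.Connected) : IsMP G.lap (Bm G) ∧
    G.lap * Bm G = 1 - Pm G ∧ Bm G * G.lap = 1 - Pm G := by
  have hU := A_isUnit G hG
  have hAAi : (G.lap + Pm G) * (G.lap + Pm G)⁻¹ = 1 := Matrix.mul_nonsing_inv _ hU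
  have hAiA : (G.lap + Pm G)⁻¹ * (G.lap + Pm G) = 1 := Matrix.nonsing_inv_mul _ hU
  have hPA : Pm G * (G.lap + Pm G) = Pm G := by
    rw [Matrix.mul_add, Pm_mul_lap, Pm_mul_Pm G hG, zero_add]
  have hAP : (G.lap + Pm G) * Pm G = Pm G := by
    rw [Matrix.add_mul, lap_mul_Pm, Pm_mul_Pm G hG, zero_add]
  have hPAi : Pm G * (G.lap + Pm G)⁻¹ = Pm G := by
    calc Pm G * (G.lap + Pm G)⁻¹ = (Pm G * (G.lap + Pm G)) * (G.lap + Pm G)⁻¹ := by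
          rw [hPA]
      _ = Pm G * ((G.lap + Pm G) * (G.lap + Pm G)⁻¹) := by rw [mul_assoc]
      _ = Pm G := by rw [hAAi, mul_one]
  have hAiP : (G.lap + Pm G)⁻¹ * Pm G = Pm G := by
    calc (G.lap + Pm G)⁻¹ * Pm G = (G.lap + Pm G)⁻¹ * ((G.lap + Pm G) * Pm G) := by
          rw [hAP]
      _ = ((G.lap + Pm G)⁻¹ * (G.lap + Pm G)) * Pm G := by rw [mul_assoc]
      _ = Pm G := by rw [hAiA, one_mul]
  have hLB : G.lap * Bm G = 1 - Pm G := by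
    rw [Bm, Matrix.mul_sub, lap_mul_Pm, sub_zero]
    have h' : G.lap * (G.lap + Pm G)⁻¹
        = (G.lap + Pm G) * (G.lap + Pm G)⁻¹ - Pm G * (G.lap + Pm G)⁻¹ := by
      rw [← Matrix.sub_mul, add_sub_cancel_right]
    rw [h', hAAi, hPAi]
  have hBL : Bm G * G.lap = 1 - Pm G := by
    rw [Bm, Matrix.sub_mul, Pm_mul_lap, sub_zero]
    have h' : (G.lap + Pm G)⁻¹ * G.lap
        = (G.lap + Pm G)⁻¹ * (G.lap + Pm G) - (G.lap + Pm G)⁻¹ * Pm G := by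
      rw [← Matrix.mul_sub, add_sub_cancel_right]
    rw [h', hAiA, hAiP]
  have hPB : Pm G * Bm G = 0 := by
    rw [Bm, Matrix.mul_sub, hPAi, Pm_mul_Pm G hG, sub_self]
  have hPt : (1 - Pm G)ᵀ = 1 - Pm G := by
    rw [Matrix.transpose_sub, Matrix.transpose_one]
    rfl
  refine ⟨⟨?_, ?_, ?_, ?_⟩, hLB, hBL⟩
  · rw [hLB, Matrix.sub_mul, one_mul, Pm_mul_lap, sub_zero]
  · rw [hBL, Matrix.sub_mul, one_mul, hPB, sub_zero]
  · rw [hLB, hPt]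
  · rw [hBL, hPt]

lemma mpinv_lap (G : WMG) (hG : G.Connected) : G.lap.mpinv = Bm G :=
  mpinv_eq (isMP_Bm G hG).1

lemma mpinv_symm (G : WMG) (hG : G.Connected) : (G.lap.mpinv)ᵀ = G.lap.mpinv := by
  rw [mpinv_lap G hG, Bm, Matrix.transpose_sub, Matrix.transpose_nonsing_inv]
  have h1 : (G.lap + Pm G)ᵀ = G.lap + Pm G := by
    rw [Matrix.transpose_add, lap_symm]; rfl
  have h2 : (Pm G)ᵀ = Pm G := rfl
  rw [h1, h2]

lemma mpinv_entry_symm (G : WMG) (hG : G.Connected) (a b : G.V) :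
    G.lap.mpinv a b = G.lap.mpinv b a := by
  conv_lhs => rw [← mpinv_symm G hG]
  rfl

lemma mpinv_mul_lap (G : WMG) (hG : G.Connected) :
    G.lap.mpinv * G.lap = 1 - Pm G := by
  rw [mpinv_lap G hG]; exact (isMP_Bm G hG).2.2

lemma lap_mul_mpinv (G : WMG) (hG : G.Connected) :
    G.lap * G.lap.mpinv = 1 - Pm G := by
  rw [mpinv_lap G hG]; exact (isMP_Bm G hG).2.1

/-! ### Voltage as a bilinear form -/

lemma mulVec_chi (G : WMG) (K : Matrix G.V G.V ℝ) (a b : G.V) :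
    (K *ᵥ chi G a b) = fun v => K v a - K v b := by
  funext v
  show (∑ w, K v w * (WMG.ind w a - WMG.ind w b)) = K v a - K v b
  simp [mul_sub, Finset.sum_sub_distrib, sum_mul_ind]

lemma volt_dot (G : WMG) (hG : G.Connected) (a b c : G.V) :
    G.volt a b c = chi G a b ⬝ᵥ (G.lap.mpinv *ᵥ chi G a c) := by
  rw [mulVec_chi, chi_dot, WMG.volt, mpinv_entry_symm G hG b a]
  ring

/-! ### Quotient graphs -/

section Quot

variable (G : WMG) (r : G.V → G.V → Prop)

noncomputable def down (f : G.V → ℝ) : (G.quot r).V → ℝ :=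
  fun a => ∑ v, WMG.ind (Quot.mk r v) a * f v

noncomputable def up (g : (G.quot r).V → ℝ) : G.V → ℝ :=
  fun v => g (Quot.mk r v)

lemma down_dot (f : G.V → ℝ) (g : (G.quot r).V → ℝ) :
    down G r f ⬝ᵥ g = f ⬝ᵥ up G r g := by
  show (∑ a : (G.quot r).V, (∑ v, WMG.ind (Quot.mk r v) a * f v) * g a)
      = ∑ v, f v * g (Quot.mk r v)
  calc (∑ a : (G.quot r).V, (∑ v, WMG.ind (Quot.mk r v) a * f v) * g a)
      = ∑ a : (G.quot r).V, ∑ v, WMG.ind (Quot.mk r v) a * f v * g a := by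
        simp only [Finset.sum_mul]
    _ = ∑ v, ∑ a : (G.quot r).V, WMG.ind (Quot.mk r v) a * f v * g a := Finset.sum_comm
    _ = ∑ v, f v * g (Quot.mk r v) := by
        refine Finset.sum_congr rfl fun v _ => ?_
        calc ∑ a : (G.quot r).V, WMG.ind (Quot.mk r v) a * f v * g a
            = ∑ a : (G.quot r).V, WMG.ind (Quot.mk r v) a * (f v * g a) :=
              Finset.sum_congr rfl fun a _ => by ring
          _ = f v * g (Quot.mk r v) := sum_ind_mul' _ _

lemma sum_down (f : G.V → ℝ) : (∑ a : (G.quot r).V, down G r f a) = ∑ v, f v := by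
  show (∑ a : (G.quot r).V, ∑ v, WMG.ind (Quot.mk r v) a * f v) = ∑ v, f v
  rw [Finset.sum_comm]
  exact Finset.sum_congr rfl fun v _ => sum_ind_mul' _ _

lemma down_sub (f g : G.V → ℝ) : down G r (f - g) = down G r f - down G r g := by
  funext a
  show (∑ v, WMG.ind (Quot.mk r v) a * (f v - g v))
      = (∑ v, WMG.ind (Quot.mk r v) a * f v) - ∑ v, WMG.ind (Quot.mk r v) a * g v
  simp [mul_sub, Finset.sum_sub_distrib]

lemma down_smul (cc : ℝ) (f : G.V → ℝ) : down G r (cc • f) = cc • down G r f := by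
  funext a
  show (∑ v, WMG.ind (Quot.mk r v) a * (cc * f v)) = cc * ∑ v, WMG.ind (Quot.mk r v) a * f v
  rw [Finset.mul_sum]
  exact Finset.sum_congr rfl fun v _ => by ring

lemma chi_self (G : WMG) (a : G.V) : chi G a a = 0 :=
  funext fun v => sub_self _

lemma down_chi (a b : G.V) :
    down G r (chi G a b) = chi (G.quot r) (Quot.mk r a) (Quot.mk r b) := by
  funext a'
  show (∑ v, WMG.ind (Quot.mk r v) a' * (WMG.ind v a - WMG.ind v b))
      = WMG.ind a' (Quot.mk r a) - WMG.ind a' (Quot.mk r b)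
  simp [mul_sub, Finset.sum_sub_distrib, sum_ind_comp]
  exact congrArg₂ (· - ·) (sum_ind_comp (Quot.mk r) a a') (sum_ind_comp (Quot.mk r) b a')

lemma quot_len (e : G.E) : (G.quot r).len e = G.len e := rfl

lemma lap_quot_mulVec (g : (G.quot r).V → ℝ) :
    (G.quot r).lap *ᵥ g = down G r (G.lap *ᵥ up G r g) := by
  funext a
  rw [lap_mulVec]
  show _ = ∑ v, WMG.ind (Quot.mk r v) a * (G.lap *ᵥ up G r g) v
  calc (∑ e, ((G.quot r).len e)⁻¹ *
          (dv (G.quot r) e a * (g ((G.quot r).ends e).1 - g ((G.quot r).ends e).2)))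
      = ∑ e, (G.len e)⁻¹ * ((∑ v, WMG.ind (Quot.mk r v) a * dv G e v) *
          (up G r g (G.ends e).1 - up G r g (G.ends e).2)) := by
        refine Finset.sum_congr rfl fun e _ => ?_
        have h1 : (∑ v, WMG.ind (Quot.mk r v) a * dv G e v)
            = WMG.ind a (Quot.mk r (G.ends e).1) - WMG.ind a (Quot.mk r (G.ends e).2) := by
          simp [dv, mul_sub, Finset.sum_sub_distrib, sum_ind_comp]
          exact congrArg₂ (· - ·) (sum_ind_comp (Quot.mk r) _ a) (sum_ind_comp (Quot.mk r) _ a)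
        rw [h1]
        rfl
    _ = ∑ e, ∑ v, WMG.ind (Quot.mk r v) a *
          ((G.len e)⁻¹ * (dv G e v * (up G r g (G.ends e).1 - up G r g (G.ends e).2))) := by
        refine Finset.sum_congr rfl fun e _ => ?_
        rw [Finset.sum_mul, Finset.mul_sum]
        exact Finset.sum_congr rfl fun v _ => by ring
    _ = ∑ v, ∑ e, WMG.ind (Quot.mk r v) a *
          ((G.len e)⁻¹ * (dv G e v * (up G r g (G.ends e).1 - up G r g (G.ends e).2))) :=
        Finset.sum_comm
    _ = ∑ v, WMG.ind (Quot.mk r v) a * (G.lap *ᵥ up G r g) v := by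
        refine Finset.sum_congr rfl fun v _ => ?_
        rw [← Finset.mul_sum, ← lap_mulVec]

lemma quot_connected (hG : G.Connected) : (G.quot r).Connected := by
  obtain ⟨⟨a₀⟩, hreach⟩ := hG
  refine ⟨⟨Quot.mk r a₀⟩, ?_⟩
  intro u' v'
  obtain ⟨a, rfl⟩ := Quot.exists_rep u'
  obtain ⟨b, rfl⟩ := Quot.exists_rep v'
  refine Relation.ReflTransGen.lift (Quot.mk r) ?_ a b (hreach a b)
  rintro x y ⟨e, he | he⟩
  · exact ⟨e, Or.inl (by show (Quot.mk r (G.ends e).1, Quot.mk r (G.ends e).2) = _; rw [he]; rfl)⟩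
  · exact ⟨e, Or.inr (by show (Quot.mk r (G.ends e).1, Quot.mk r (G.ends e).2) = _; rw [he]; rfl)⟩

end Quot

/-! ### The key identity -/

abbrev rel2 (G : WMG) (p q : G.V) : G.V → G.V → Prop := fun x y => x = p ∧ y = q

lemma res_dot_ne_zero (G : WMG) (hG : G.Connected) (p q : G.V) (hpq : p ≠ q) :
    chi G p q ⬝ᵥ (G.lap.mpinv *ᵥ chi G p q) ≠ 0 := by
  have hPχ : Pm G *ᵥ chi G p q = 0 := Pm_mulVec_zero G _ (sum_chi G p q)
  have hKχ : G.lap.mpinv *ᵥ chi G p q = (G.lap + Pm G)⁻¹ *ᵥ chi G p q := by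
    rw [mpinv_lap G hG, Bm, Matrix.sub_mulVec, hPχ, sub_zero]
  have hAz : (G.lap + Pm G) *ᵥ ((G.lap + Pm G)⁻¹ *ᵥ chi G p q) = chi G p q := by
    rw [Matrix.mulVec_mulVec, Matrix.mul_nonsing_inv _ (A_isUnit G hG), Matrix.one_mulVec]
  have hχne : chi G p q ≠ 0 := by
    intro h0
    have h1 : chi G p q p = 0 := by rw [h0]; rfl
    simp [chi, WMG.ind, hpq] at h1
  intro h
  have hq : ((G.lap + Pm G)⁻¹ *ᵥ chi G p q) ⬝ᵥ
      ((G.lap + Pm G) *ᵥ ((G.lap + Pm G)⁻¹ *ᵥ chi G p q)) = 0 := by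
    rw [hAz, dotProduct_comm, ← hKχ]
    exact h
  have hz0 := quadA_zero G hG _ hq
  rw [hz0, Matrix.mulVec_zero] at hAz
  exact hχne hAz.symm

lemma key' (G : WMG) (hG : G.Connected) (p q : G.V) (hpq : p ≠ q)
    (x y : G.V → ℝ) (hx : (∑ v, x v) = 0) (hy : (∑ v, y v) = 0) :
    down G (rel2 G p q) x ⬝ᵥ
        ((G.quot (rel2 G p q)).lap.mpinv *ᵥ down G (rel2 G p q) y)
      = x ⬝ᵥ (G.lap.mpinv *ᵥ y)
        - (chi G p q ⬝ᵥ (G.lap.mpinv *ᵥ y))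
            / (chi G p q ⬝ᵥ (G.lap.mpinv *ᵥ chi G p q))
          * (chi G p q ⬝ᵥ (G.lap.mpinv *ᵥ x)) := by
  have hG' : (G.quot (rel2 G p q)).Connected := quot_connected G _ hG
  have hρ0 := res_dot_ne_zero G hG p q hpq
  set cc := (chi G p q ⬝ᵥ (G.lap.mpinv *ᵥ y))
      / (chi G p q ⬝ᵥ (G.lap.mpinv *ᵥ chi G p q)) with hcc
  set w := G.lap.mpinv *ᵥ y - cc • (G.lap.mpinv *ᵥ chi G p q) with hwdef
  have hwpq : w p = w q := by
    have hcw : chi G p q ⬝ᵥ w = 0 := by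
      rw [hwdef, dotProduct_sub, dotProduct_smul, smul_eq_mul, hcc]
      field_simp
      ring
    have h2 := chi_dot G p q w
    rw [hcw] at h2
    linarith
  set w' : (G.quot (rel2 G p q)).V → ℝ :=
    Quot.lift w (fun a b hab => by obtain ⟨rfl, rfl⟩ := hab; exact hwpq) with hw'
  have hupw : up G (rel2 G p q) w' = w := rfl
  have hπ : Quot.mk (rel2 G p q) p = Quot.mk (rel2 G p q) q := Quot.sound ⟨rfl, rfl⟩
  have hLw : G.lap *ᵥ w = y - cc • chi G p q := by
    rw [hwdef, Matrix.mulVec_sub, Matrix.mulVec_smul]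
    have h1 : G.lap *ᵥ (G.lap.mpinv *ᵥ y) = y := by
      rw [Matrix.mulVec_mulVec, lap_mul_mpinv G hG, Matrix.sub_mulVec, Matrix.one_mulVec,
        Pm_mulVec_zero G y hy, sub_zero]
    have h2 : G.lap *ᵥ (G.lap.mpinv *ᵥ chi G p q) = chi G p q := by
      rw [Matrix.mulVec_mulVec, lap_mul_mpinv G hG, Matrix.sub_mulVec, Matrix.one_mulVec,
        Pm_mulVec_zero G _ (sum_chi G p q), sub_zero]
    rw [h1, h2]
  have hL'w' : (G.quot (rel2 G p q)).lap *ᵥ w' = down G (rel2 G p q) y := by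
    rw [lap_quot_mulVec, hupw, hLw, down_sub, down_smul, down_chi, hπ, chi_self (G.quot (rel2 G p q)) (Quot.mk (rel2 G p q) q),
      smul_zero, sub_zero]
  have hstep : (G.quot (rel2 G p q)).lap.mpinv *ᵥ down G (rel2 G p q) y
      = w' - Pm (G.quot (rel2 G p q)) *ᵥ w' := by
    rw [← hL'w', Matrix.mulVec_mulVec, mpinv_mul_lap _ hG', Matrix.sub_mulVec,
      Matrix.one_mulVec]
  rw [hstep, dotProduct_sub]
  have hdot0 : down G (rel2 G p q) x ⬝ᵥ (Pm (G.quot (rel2 G p q)) *ᵥ w') = 0 := by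
    have h1 : down G (rel2 G p q) x ⬝ᵥ (Pm (G.quot (rel2 G p q)) *ᵥ w')
        = (∑ a : (G.quot (rel2 G p q)).V, down G (rel2 G p q) x a) *
          ((Fintype.card (G.quot (rel2 G p q)).V : ℝ)⁻¹ * ∑ b, w' b) := by
      simp only [dotProduct]
      rw [Finset.sum_mul]
      exact Finset.sum_congr rfl fun a _ => by rw [Pm_mulVec]
    rw [h1, sum_down, hx, zero_mul]
  rw [hdot0, sub_zero, down_dot, hupw, hwdef, dotProduct_sub,
    dotProduct_smul, smul_eq_mul, dot_mulVec_symm (mpinv_symm G hG) x (chi G p q)]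

theorem main_identity (G : WMG) (hG : G.Connected)
    (p q s t u : G.V) (hpq : p ≠ q) :
    G.volt u t s =
      (G.quot (rel2 G p q)).volt (Quot.mk (rel2 G p q) u) (Quot.mk (rel2 G p q) t)
          (Quot.mk (rel2 G p q) s) +
        (1 / G.res p q) *
          ((G.volt p q u - G.volt p q t) * (G.volt p q u - G.volt p q s)) := by
  have hG' : (G.quot (rel2 G p q)).Connected := quot_connected G _ hG
  have hρ0 := res_dot_ne_zero G hG p q hpq
  have h3 : G.volt p q u - G.volt p q t
      = -(chi G p q ⬝ᵥ (G.lap.mpinv *ᵥ chi G u t)) := by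
    rw [volt_dot G hG p q u, volt_dot G hG p q t, mulVec_chi, mulVec_chi, mulVec_chi,
      chi_dot, chi_dot, chi_dot]
    ring
  have h4 : G.volt p q u - G.volt p q s
      = -(chi G p q ⬝ᵥ (G.lap.mpinv *ᵥ chi G u s)) := by
    rw [volt_dot G hG p q u, volt_dot G hG p q s, mulVec_chi, mulVec_chi, mulVec_chi,
      chi_dot, chi_dot, chi_dot]
    ring
  have h5 : G.res p q = chi G p q ⬝ᵥ (G.lap.mpinv *ᵥ chi G p q) := by
    rw [WMG.res, mulVec_chi, chi_dot, mpinv_entry_symm G hG q p]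
    ring
  have hkey := key' G hG p q hpq (chi G u t) (chi G u s) (sum_chi G u t) (sum_chi G u s)
  rw [down_chi, down_chi] at hkey
  rw [volt_dot G hG u t s, volt_dot _ hG' (Quot.mk (rel2 G p q) u) (Quot.mk (rel2 G p q) t)
    (Quot.mk (rel2 G p q) s), hkey, h3, h4, h5]
  field_simp
  ring

end VoltAux

/-- For a finite connected weighted graph `G` and vertices `p ≠ q`, `s`, `t`, `u`:
`j_u(t,s) = j_u^{G_{pq}}(t,s) + (1/r(p,q)) (j_p(q,u) - j_p(q,t)) (j_p(q,u) - j_p(q,s))`. -/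
theorem volt_of_two_vertex_identification (G : WMG) (hG : G.Connected)
    (p q s t u : G.V) (hpq : p ≠ q) :
    G.volt u t s =
      (G.ident2 p q).volt (G.ident2Map p q u) (G.ident2Map p q t) (G.ident2Map p q s) +
        (1 / G.res p q) *
          ((G.volt p q u - G.volt p q t) * (G.volt p q u - G.volt p q s)) := by
  exact VoltAux.main_identity G hG p q s t u hpq
end

section
/- (Explicit Rayleigh's Cutting Law) Let G be a finite connected weighted graph, and let e_i be an edge of G with endpoints p_i, q_i and length L_i that is not a bridge. Then for all vertices s, t of G: r_G(s,t) = r_{G−e_i}(s,t) − (1/(L_i + R_i))·( j_{p_i}^{G−e_i}(q_i,s) − j_{p_i}^{G−e_i}(q_i,t) )² = r_{G−e_i}(s,t) − ((L_i + R_i)/L_i²)·( j_{p_i}(q_i,s) − j_{p_i}(q_i,t) )². In particular r_{G−e_i}(s,t) ≥ r_G(s,t), with equality if and only if j_{p_i}(q_i,s) = j_{p_i}(q_i,t). -/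
open scoped Classical

section RCLaux
open Matrix WMG

namespace RCL

variable {n : Type} [Fintype n]

lemma mpinv_eq (A B : Matrix n n ℝ)
    (h1 : A * B * A = A) (h2 : B * A * B = B)
    (h3 : (A * B)ᵀ = A * B) (h4 : (B * A)ᵀ = B * A) : A.mpinv = B := by
  have hex : ∃ C : Matrix n n ℝ,
      A * C * A = A ∧ C * A * C = C ∧ (A * C)ᵀ = A * C ∧ (C * A)ᵀ = C * A :=
    ⟨B, h1, h2, h3, h4⟩
  rw [Matrix.mpinv, dif_pos hex]
  obtain ⟨c1, c2, c3, c4⟩ := hex.choose_spec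
  set C := hex.choose with hC
  have hAC : A * C = A * B := by
    calc A * C = (A * C)ᵀ := c3.symm
    _ = Cᵀ * Aᵀ := by rw [transpose_mul]
    _ = Cᵀ * (A * B * A)ᵀ := by rw [h1]
    _ = Cᵀ * (Aᵀ * (A * B)ᵀ) := by rw [transpose_mul]
    _ = (Cᵀ * Aᵀ) * (A * B) := by rw [h3, ← mul_assoc, ← mul_assoc]
    _ = (A * C)ᵀ * (A * B) := by rw [transpose_mul]
    _ = (A * C) * (A * B) := by rw [c3]
    _ = (A * C * A) * B := (mul_assoc _ _ _).symm
    _ = A * B := by rw [c1]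
  have hCA : C * A = B * A := by
    calc C * A = (C * A)ᵀ := c4.symm
    _ = Aᵀ * Cᵀ := by rw [transpose_mul]
    _ = (A * B * A)ᵀ * Cᵀ := by rw [h1]
    _ = (Aᵀ * (Bᵀ * Aᵀ)) * Cᵀ := by rw [transpose_mul, transpose_mul]
    _ = ((B * A)ᵀ * Aᵀ) * Cᵀ := by simp only [transpose_mul, mul_assoc]
    _ = (B * A) * (Aᵀ * Cᵀ) := by rw [h4, mul_assoc]
    _ = (B * A) * (C * A)ᵀ := by rw [transpose_mul]
    _ = (B * A) * (C * A) := by rw [c4]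
    _ = B * (A * C * A) := by rw [mul_assoc, mul_assoc]
    _ = B * A := by rw [c1]
  calc C = C * A * C := c2.symm
  _ = B * A * C := by rw [hCA]
  _ = B * (A * C) := mul_assoc _ _ _
  _ = B * (A * B) := by rw [hAC]
  _ = B * A * B := (mul_assoc _ _ _).symm
  _ = B := h2

lemma mul_vecMulVec (M : Matrix n n ℝ) (a b : n → ℝ) :
    M * vecMulVec a b = vecMulVec (M.mulVec a) b := by
  ext i j
  simp [Matrix.mul_apply, vecMulVec_apply, Matrix.mulVec, dotProduct,
    Finset.sum_mul, mul_assoc]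

lemma vecMulVec_mul (M : Matrix n n ℝ) (a b : n → ℝ) :
    vecMulVec a b * M = vecMulVec a (Mᵀ.mulVec b) := by
  ext i j
  simp [Matrix.mul_apply, vecMulVec_apply, Matrix.mulVec, dotProduct,
    Finset.mul_sum, mul_assoc, mul_comm, mul_left_comm]

lemma vecMulVec_mul_vecMulVec (a b c d : n → ℝ) :
    vecMulVec a b * vecMulVec c d = (b ⬝ᵥ c) • vecMulVec a d := by
  ext i j
  simp only [Matrix.mul_apply, vecMulVec_apply, dotProduct, Matrix.smul_apply,
    Finset.sum_mul, smul_eq_mul, Finset.mul_sum]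
  apply Finset.sum_congr rfl
  intros; ring

omit [Fintype n] in
lemma vecMulVec_transpose (a b : n → ℝ) : (vecMulVec a b)ᵀ = vecMulVec b a := by
  ext i j; simp [vecMulVec_apply, mul_comm]

/-- The vector `χ_p - χ_q`. -/
noncomputable def wv {V : Type} (p q : V) : V → ℝ := fun u => ind u p - ind u q

/-- The all-ones matrix. -/
noncomputable def Jm (V : Type) [Fintype V] : Matrix V V ℝ := Matrix.of fun _ _ => 1

/-- Projection onto the orthogonal complement of the all-ones vector. -/
noncomputable def Pm (V : Type) [Fintype V] : Matrix V V ℝ :=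
  1 - ((Fintype.card V : ℝ))⁻¹ • Jm V

variable {V : Type} [Fintype V]

lemma wv_dot (p q : V) (x : V → ℝ) : wv p q ⬝ᵥ x = x p - x q := by
  simp [wv, dotProduct, sub_mul, WMG.ind, ite_mul, Finset.sum_sub_distrib]

lemma dot_wv (p q : V) (x : V → ℝ) : x ⬝ᵥ wv p q = x p - x q := by
  simp [wv, dotProduct, mul_sub, WMG.ind, mul_ite, Finset.sum_sub_distrib]

lemma vecMulVec_mulVec (a b x : n → ℝ) :
    (vecMulVec a b).mulVec x = (b ⬝ᵥ x) • a := by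
  ext i
  simp only [Matrix.mulVec, vecMulVec_apply, dotProduct, Pi.smul_apply,
    smul_eq_mul, Finset.mul_sum]
  rw [Finset.sum_mul]
  apply Finset.sum_congr rfl
  intros; ring

lemma sum_mulVec' {ι : Type} (s : Finset ι) (M : ι → Matrix n n ℝ) (x : n → ℝ) :
    (∑ i ∈ s, M i).mulVec x = ∑ i ∈ s, (M i).mulVec x := by
  ext u
  simp only [Matrix.mulVec, dotProduct, Finset.sum_apply, Matrix.sum_apply,
    Finset.sum_mul]
  rw [Finset.sum_comm]

lemma dotProduct_sum' {ι : Type} (s : Finset ι) (v : ι → n → ℝ) (x : n → ℝ) :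
    x ⬝ᵥ (∑ i ∈ s, v i) = ∑ i ∈ s, x ⬝ᵥ v i := by
  simp only [dotProduct, Finset.sum_apply, Finset.mul_sum]
  rw [Finset.sum_comm]

lemma lap_eq (H : WMG) :
    H.lap = ∑ e : H.E, (H.len e)⁻¹ • vecMulVec (wv (H.ends e).1 (H.ends e).2)
      (wv (H.ends e).1 (H.ends e).2) := rfl

lemma lap_transpose (H : WMG) : H.lapᵀ = H.lap := by
  rw [lap_eq, Matrix.transpose_sum]
  exact Finset.sum_congr rfl fun e _ => by
    rw [Matrix.transpose_smul, vecMulVec_transpose]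

lemma lap_mulVec (H : WMG) (x : H.V → ℝ) :
    H.lap.mulVec x = ∑ e : H.E,
      ((H.len e)⁻¹ * (x (H.ends e).1 - x (H.ends e).2)) • wv (H.ends e).1 (H.ends e).2 := by
  rw [lap_eq, sum_mulVec']
  refine Finset.sum_congr rfl fun e _ => ?_
  rw [Matrix.smul_mulVec, vecMulVec_mulVec, wv_dot, smul_smul]

lemma quad (H : WMG) (x : H.V → ℝ) :
    x ⬝ᵥ H.lap.mulVec x
      = ∑ e : H.E, (H.len e)⁻¹ * (x (H.ends e).1 - x (H.ends e).2)^2 := by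
  rw [lap_mulVec, dotProduct_sum']
  refine Finset.sum_congr rfl fun e _ => ?_
  rw [dotProduct_smul, dot_wv]
  simp [smul_eq_mul]; ring

lemma quad_nonneg (H : WMG) (x : H.V → ℝ) : 0 ≤ x ⬝ᵥ H.lap.mulVec x := by
  rw [quad]
  refine Finset.sum_nonneg fun e _ => ?_
  have := H.len_pos e
  positivity

lemma lap_mulVec_one (H : WMG) : H.lap.mulVec (fun _ => (1:ℝ)) = 0 := by
  rw [lap_mulVec]
  ext u
  rw [Finset.sum_apply]
  simp

lemma lap_mul_Jm (H : WMG) : H.lap * Jm H.V = 0 := by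
  ext u v
  have h := congrFun (lap_mulVec_one H) u
  simpa [Matrix.mul_apply, Jm, Matrix.mulVec, dotProduct] using h

lemma Jm_mul_lap (H : WMG) : Jm H.V * H.lap = 0 := by
  have := congrArg Matrix.transpose (lap_mul_Jm H)
  simpa [Matrix.transpose_mul, lap_transpose,
    (by ext; simp [Jm] : (Jm H.V)ᵀ = Jm H.V)] using this

lemma Jm_mul_Jm : Jm V * Jm V = (Fintype.card V : ℝ) • Jm V := by
  ext u v; simp [Jm, Matrix.mul_apply]

lemma kernel_lemma (H : WMG) (hH : H.Connected) (x : H.V → ℝ)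
    (hq : x ⬝ᵥ H.lap.mulVec x = 0) (hs : ∑ u, x u = 0) : x = 0 := by
  rw [quad] at hq
  have hterm : ∀ e : H.E, x (H.ends e).1 = x (H.ends e).2 := by
    intro e
    have hnn : ∀ e ∈ Finset.univ, (0:ℝ) ≤ (H.len e)⁻¹ * (x (H.ends e).1 - x (H.ends e).2)^2 := by
      intro f _
      have := H.len_pos f
      positivity
    have h0 := (Finset.sum_eq_zero_iff_of_nonneg hnn).mp hq e (Finset.mem_univ e)
    have hl := H.len_pos e
    have : (x (H.ends e).1 - x (H.ends e).2)^2 = 0 := by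
      rcases mul_eq_zero.mp h0 with h | h
      · exact absurd h (by positivity)
      · exact h
    have := pow_eq_zero_iff (n := 2) (by norm_num) |>.mp this
    linarith
  have hadj : ∀ u v : H.V, H.Adj u v → x u = x v := by
    rintro u v ⟨e, h | h⟩
    · have := hterm e; rw [h] at this; exact this
    · have := hterm e; rw [h] at this; exact this.symm
  have hconst : ∀ u v : H.V, x u = x v := by
    intro u v
    induction hH.2 u v with
    | refl => rfl
    | tail _ h ih => exact ih.trans (hadj _ _ h)
  ext u
  have : ∑ v : H.V, x v = ∑ v : H.V, x u :=
    Finset.sum_congr rfl fun v _ => (hconst v u)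
  rw [hs] at this
  simp only [Finset.sum_const, Finset.card_univ, nsmul_eq_mul] at this
  have hcard : (0:ℝ) < Fintype.card H.V := by
    have : Nonempty H.V := hH.1
    exact_mod_cast Fintype.card_pos
  have := this.symm
  have hx : x u = 0 := by
    rcases mul_eq_zero.mp this with h | h
    · exact absurd h (ne_of_gt hcard)
    · exact h
  simpa using hx

lemma Jm_transpose : (Jm V)ᵀ = Jm V := by ext; simp [Jm]

lemma Pm_transpose : (Pm V)ᵀ = Pm V := by
  rw [Pm, Matrix.transpose_sub, Matrix.transpose_smul, Jm_transpose, Matrix.transpose_one]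

lemma Jm_mulVec (x : V → ℝ) : (Jm V).mulVec x = fun _ => ∑ u, x u := by
  ext u; simp [Jm, Matrix.mulVec, dotProduct]

lemma mpinv_lap_spec (H : WMG) (hH : H.Connected) :
    H.lap.mpinv * H.lap = Pm H.V ∧ H.lap * H.lap.mpinv = Pm H.V ∧
    (H.lap.mpinv)ᵀ = H.lap.mpinv ∧ H.lap.mpinv * Jm H.V = 0 ∧
    ∀ x : H.V → ℝ, 0 ≤ x ⬝ᵥ H.lap.mpinv.mulVec x := by
  have hne : Nonempty H.V := hH.1
  set ν : ℝ := (Fintype.card H.V : ℝ) with hνdef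
  have hν : ν ≠ 0 := by
    have h : 0 < Fintype.card H.V := Fintype.card_pos
    simp only [hνdef, ne_eq, Nat.cast_eq_zero]
    omega
  set K : Matrix H.V H.V ℝ := H.lap + ν⁻¹ • Jm H.V with hK
  have hKt : Kᵀ = K := by
    rw [hK, Matrix.transpose_add, Matrix.transpose_smul, lap_transpose, Jm_transpose]
  have hquadK : ∀ v : H.V → ℝ, v ⬝ᵥ K.mulVec v
      = v ⬝ᵥ H.lap.mulVec v + ν⁻¹ * (∑ u, v u)^2 := by
    intro v
    rw [hK, Matrix.add_mulVec, dotProduct_add, Matrix.smul_mulVec,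
      dotProduct_smul, Jm_mulVec]
    congr 1
    simp [dotProduct, smul_eq_mul, ← Finset.sum_mul, sq]
  have hνpos : (0:ℝ) < ν := by
    have : 0 < Fintype.card H.V := Fintype.card_pos
    simp only [hνdef]
    exact_mod_cast this
  have hdet : IsUnit K.det := by
    by_contra hdet
    have hdet0 : K.det = 0 := by simpa [isUnit_iff_ne_zero] using hdet
    obtain ⟨v, hv0, hvK⟩ := Matrix.exists_mulVec_eq_zero_iff.mpr hdet0
    have h0 : v ⬝ᵥ K.mulVec v = 0 := by rw [hvK]; simp
    rw [hquadK] at h0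
    have h1 : 0 ≤ v ⬝ᵥ H.lap.mulVec v := quad_nonneg H v
    have h2 : 0 ≤ ν⁻¹ * (∑ u, v u)^2 := by positivity
    have hqv : v ⬝ᵥ H.lap.mulVec v = 0 := by linarith
    have hsv : (∑ u, v u) = 0 := by
      have h3 : ν⁻¹ * (∑ u, v u)^2 = 0 := by linarith
      have h4 : (∑ u, v u)^2 = 0 := by
        rcases mul_eq_zero.mp h3 with h | h
        · exact absurd h (by positivity)
        · exact h
      exact pow_eq_zero_iff (n := 2) (by norm_num) |>.mp h4
    exact hv0 (kernel_lemma H hH v hqv hsv)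
  have hKK : K * K⁻¹ = 1 := Matrix.mul_nonsing_inv K hdet
  have hKK' : K⁻¹ * K = 1 := Matrix.nonsing_inv_mul K hdet
  have hK1 : K.mulVec (fun _ => (1:ℝ)) = fun _ => (1:ℝ) := by
    rw [hK, Matrix.add_mulVec, lap_mulVec_one, Matrix.smul_mulVec, Jm_mulVec]
    ext u
    simp [hν, hνdef]
  have hKi1 : K⁻¹.mulVec (fun _ => (1:ℝ)) = fun _ => (1:ℝ) := by
    conv_lhs => rw [← hK1]
    rw [Matrix.mulVec_mulVec, hKK', Matrix.one_mulVec]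
  have hKiJ : K⁻¹ * Jm H.V = Jm H.V := by
    ext u v
    have := congrFun hKi1 u
    simpa [Matrix.mul_apply, Jm, Matrix.mulVec, dotProduct] using this
  have hKit : (K⁻¹)ᵀ = K⁻¹ := by rw [Matrix.transpose_nonsing_inv, hKt]
  have hJKi : Jm H.V * K⁻¹ = Jm H.V := by
    have := congrArg Matrix.transpose hKiJ
    rwa [Matrix.transpose_mul, hKit, Jm_transpose] at this
  set N : Matrix H.V H.V ℝ := K⁻¹ - ν⁻¹ • Jm H.V with hN
  have hNt : Nᵀ = N := by
    rw [hN, Matrix.transpose_sub, Matrix.transpose_smul, hKit, Jm_transpose]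
  have hJJ : Jm H.V * Jm H.V = ν • Jm H.V := Jm_mul_Jm
  have hJN : Jm H.V * N = 0 := by
    rw [hN, Matrix.mul_sub, hJKi, Matrix.mul_smul, hJJ, smul_smul,
      inv_mul_cancel₀ hν, one_smul, sub_self]
  have hNJ : N * Jm H.V = 0 := by
    have := congrArg Matrix.transpose hJN
    rwa [Matrix.transpose_mul, hNt, Jm_transpose, Matrix.transpose_zero] at this
  have hKJ : K * Jm H.V = Jm H.V := by
    rw [hK, Matrix.add_mul, lap_mul_Jm, Matrix.smul_mul, hJJ, smul_smul,
      inv_mul_cancel₀ hν, one_smul, zero_add]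
  have hKN : K * N = Pm H.V := by
    rw [hN, Matrix.mul_sub, hKK, Matrix.mul_smul, hKJ, Pm]
  have hLapK : H.lap = K - ν⁻¹ • Jm H.V := by rw [hK, add_sub_cancel_right]
  have hLN : H.lap * N = Pm H.V := by
    rw [hLapK, Matrix.sub_mul, hKN, Matrix.smul_mul, hJN, smul_zero, sub_zero]
  have hNL : N * H.lap = Pm H.V := by
    have := congrArg Matrix.transpose hLN
    rwa [Matrix.transpose_mul, hNt, lap_transpose, Pm_transpose] at this
  have hJL : Jm H.V * H.lap = 0 := Jm_mul_lap H
  have hPL : Pm H.V * H.lap = H.lap := by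
    rw [Pm, Matrix.sub_mul, Matrix.one_mul, Matrix.smul_mul, hJL, smul_zero, sub_zero]
  have hPN : Pm H.V * N = N := by
    rw [Pm, Matrix.sub_mul, Matrix.one_mul, Matrix.smul_mul, hJN, smul_zero, sub_zero]
  have hmp : H.lap.mpinv = N := by
    refine mpinv_eq _ _ ?_ ?_ ?_ ?_
    · rw [hLN, hPL]
    · rw [hNL, hPN]
    · rw [hLN, Pm_transpose]
    · rw [hNL, Pm_transpose]
  rw [hmp]
  refine ⟨hNL, hLN, hNt, hNJ, ?_⟩
  intro x
  have hNN : N = N * H.lap * N := by rw [hNL, hPN]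
  have hxN : Matrix.vecMul x N = N.mulVec x := by
    conv_lhs => rw [← hNt]
    rw [Matrix.vecMul_transpose]
  have key : x ⬝ᵥ N.mulVec x = (N.mulVec x) ⬝ᵥ H.lap.mulVec (N.mulVec x) := by
    conv_lhs => rw [hNN]
    rw [← Matrix.mulVec_mulVec, ← Matrix.mulVec_mulVec, Matrix.dotProduct_mulVec, hxN]
  rw [key]
  exact quad_nonneg H _

end RCL

end RCLaux


/-- **Explicit Rayleigh's Cutting Law.**  If the edge `e` (with endpoints
`p_i, q_i` and length `L_i`) is not a bridge of the finite connected weighted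
graph `G`, then for all vertices `s, t`:
`r(s,t) = r_{G-e}(s,t) - (1/(L_i+R_i)) (j^{G-e}_{p_i}(q_i,s) - j^{G-e}_{p_i}(q_i,t))²
        = r_{G-e}(s,t) - ((L_i+R_i)/L_i²) (j_{p_i}(q_i,s) - j_{p_i}(q_i,t))²`;
in particular `r_{G-e}(s,t) ≥ r(s,t)` with equality iff
`j_{p_i}(q_i,s) = j_{p_i}(q_i,t)`. -/
theorem explicit_rayleigh_cutting_law (G : WMG) (hG : G.Connected)
    (e : G.E) (he : ¬ G.IsBridge e) (s t : G.V) :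
    (G.res s t = (G.delete e).res s t -
        (1 / (G.len e + (G.delete e).res (G.ends e).1 (G.ends e).2)) *
          ((G.delete e).volt (G.ends e).1 (G.ends e).2 s -
           (G.delete e).volt (G.ends e).1 (G.ends e).2 t) ^ 2) ∧
    (G.res s t = (G.delete e).res s t -
        ((G.len e + (G.delete e).res (G.ends e).1 (G.ends e).2) / (G.len e) ^ 2) *
          (G.volt (G.ends e).1 (G.ends e).2 s -
           G.volt (G.ends e).1 (G.ends e).2 t) ^ 2) ∧
    G.res s t ≤ (G.delete e).res s t ∧
    ((G.delete e).res s t = G.res s t ↔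
      G.volt (G.ends e).1 (G.ends e).2 s = G.volt (G.ends e).1 (G.ends e).2 t) := by
  classical
  open Matrix RCL WMG in
  have hdc : (G.delete e).Connected := not_not.mp he
  set p := (G.ends e).1 with hp
  set q := (G.ends e).2 with hq
  set L := G.len e with hLdef
  have hL : 0 < L := G.len_pos e
  set Mp : Matrix G.V G.V ℝ := (G.delete e).lap.mpinv with hMp
  set M : Matrix G.V G.V ℝ := (G.delete e).lap with hM
  set J : Matrix G.V G.V ℝ := Jm G.V with hJ
  set P : Matrix G.V G.V ℝ := Pm G.V with hP
  obtain ⟨hMpL0, hLMp0, hMt0, hMJ0, hpsd0⟩ := mpinv_lap_spec (G.delete e) hdc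
  have hMpL : Mp * M = P := hMpL0
  have hLMp : M * Mp = P := hLMp0
  have hMt : Mpᵀ = Mp := hMt0
  have hMJ : Mp * J = 0 := hMJ0
  have hpsd : ∀ x : G.V → ℝ, 0 ≤ x ⬝ᵥ Mp.mulVec x := hpsd0
  clear hMpL0 hLMp0 hMt0 hMJ0 hpsd0
  set w : G.V → ℝ := wv p q with hw
  set mw : G.V → ℝ := Mp.mulVec w with hmwdef
  set R : ℝ := (G.delete e).res p q with hRdef
  have hmw : ∀ u, mw u = Mp u p - Mp u q := fun u => dot_wv p q (Mp u)
  have hsym : ∀ u v, Mp u v = Mp v u := fun u v => congrFun (congrFun hMt v) u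
  have hwmw : w ⬝ᵥ mw = R := by
    have hRval : R = Mp p p - 2 * Mp p q + Mp q q := by
      rw [hRdef, WMG.res.eq_1 (G.delete e) p q, ← hMp]
    rw [hw, wv_dot, hmw p, hmw q, hRval, hsym q p]
    ring
  have hRnn : 0 ≤ R := by rw [← hwmw]; exact hpsd w
  have hLR : 0 < L + R := by linarith
  -- decomposition of the Laplacian
  have hdecomp : G.lap = M + L⁻¹ • vecMulVec w w := by
    have hsub : M = ∑ f ∈ Finset.univ.erase e,
        ((G.len f)⁻¹ • vecMulVec (wv (G.ends f).1 (G.ends f).2)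
          (wv (G.ends f).1 (G.ends f).2)) := by
      rw [hM, lap_eq]
      exact (Finset.sum_subtype (p := fun f : G.E => f ≠ e) (F := (G.delete e).instE)
        (Finset.univ.erase e) (fun x => by simp [Finset.mem_erase])
        (fun f => (G.len f)⁻¹ • vecMulVec (wv (G.ends f).1 (G.ends f).2)
          (wv (G.ends f).1 (G.ends f).2))).symm
    rw [lap_eq, ← Finset.add_sum_erase Finset.univ _ (Finset.mem_univ e), ← hsub,
      add_comm, ← hp, ← hq, ← hLdef, ← hw]
  have hsumw : ∑ u, w u = 0 := by
    simp [hw, wv, WMG.ind, Finset.sum_sub_distrib]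
  have hJw : J.mulVec w = 0 := by
    rw [hJ, Jm_mulVec]
    ext u
    simp [hsumw]
  have hPw : P.mulVec w = w := by
    rw [hP, Pm, Matrix.sub_mulVec, Matrix.one_mulVec, Matrix.smul_mulVec, ← hJ, hJw,
      smul_zero, sub_zero]
  have hJMp : J * Mp = 0 := by
    have h := congrArg Matrix.transpose hMJ
    rwa [Matrix.transpose_mul, hMt, hJ, Jm_transpose, Matrix.transpose_zero, ← hJ] at h
  have hPMp : P * Mp = Mp := by
    rw [hP, Pm, Matrix.sub_mul, Matrix.one_mul, Matrix.smul_mul, ← hJ, hJMp, smul_zero,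
      sub_zero]
  have hJM : J * M = 0 := Jm_mul_lap (G.delete e)
  have hPM : P * M = M := by
    rw [hP, Pm, Matrix.sub_mul, Matrix.one_mul, Matrix.smul_mul, ← hJ, hJM, smul_zero,
      sub_zero]
  have hMmw : M.mulVec mw = w := by
    rw [hmwdef, Matrix.mulVec_mulVec, hLMp, hPw]
  have hPmw : P.mulVec mw = mw := by
    rw [hmwdef, Matrix.mulVec_mulVec, hPMp]
  have hMpvw : Mpᵀ.mulVec w = mw := by rw [hMt, hmwdef]
  -- the pseudoinverse of the full Laplacian
  set B : Matrix G.V G.V ℝ := Mp - (L + R)⁻¹ • vecMulVec mw mw with hB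
  have hAB : G.lap * B = P := by
    rw [hdecomp, hB, Matrix.add_mul, Matrix.mul_sub, Matrix.mul_sub,
      Matrix.mul_smul, Matrix.mul_smul, Matrix.smul_mul, Matrix.smul_mul,
      RCL.mul_vecMulVec, RCL.vecMulVec_mul, hMpvw, hMmw, RCL.vecMulVec_mul_vecMulVec, hwmw,
      hLMp]
    have hc : L⁻¹ • vecMulVec w mw - (L + R)⁻¹ • L⁻¹ • R • vecMulVec w mw
        = (L + R)⁻¹ • vecMulVec w mw := by
      rw [smul_smul, smul_smul, ← sub_smul]
      congr 1
      field_simp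
      try ring
    rw [hc]
    abel
  have hBt : Bᵀ = B := by
    rw [hB, Matrix.transpose_sub, Matrix.transpose_smul, vecMulVec_transpose, hMt]
  have hBA : B * G.lap = P := by
    have h := congrArg Matrix.transpose hAB
    rwa [Matrix.transpose_mul, hBt, lap_transpose, hP, Pm_transpose, ← hP] at h
  have hPA : P * G.lap = G.lap := by
    rw [hdecomp, Matrix.mul_add, hPM, Matrix.mul_smul, RCL.mul_vecMulVec, hPw]
  have hPB : P * B = B := by
    rw [hB, Matrix.mul_sub, hPMp, Matrix.mul_smul, RCL.mul_vecMulVec, hPmw]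
  have hAP : G.lap * P = G.lap := by
    have h := congrArg Matrix.transpose hPA
    rwa [Matrix.transpose_mul, lap_transpose, hP, Pm_transpose, ← hP] at h
  have hBP : B * P = B := by
    have h := congrArg Matrix.transpose hPB
    rwa [Matrix.transpose_mul, hBt, hP, Pm_transpose, ← hP] at h
  have hmpA : G.lap.mpinv = B := by
    refine mpinv_eq _ _ ?_ ?_ ?_ ?_
    · rw [Matrix.mul_assoc, hBA, hAP]
    · rw [Matrix.mul_assoc, hAB, hBP]
    · rw [hAB, hP, Pm_transpose]
    · rw [hBA, hP, Pm_transpose]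
  -- entries
  have hBapp : ∀ u v, B u v = Mp u v - (L + R)⁻¹ * (mw u * mw v) := by
    intro u v
    rw [hB]
    simp [Matrix.sub_apply, Matrix.smul_apply, vecMulVec_apply, smul_eq_mul]
  have hres : G.res s t = (G.delete e).res s t - (L + R)⁻¹ * (mw s - mw t)^2 := by
    rw [WMG.res, WMG.res.eq_1 (G.delete e) s t, hmpA, ← hMp, hBapp, hBapp, hBapp]
    ring
  have hvd : (G.delete e).volt p q s - (G.delete e).volt p q t = mw t - mw s := by
    rw [WMG.volt.eq_1 (G.delete e) p q s, WMG.volt.eq_1 (G.delete e) p q t, ← hMp, hmw s, hmw t, hsym s p, hsym s q, hsym t p, hsym t q]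
    ring
  have hR2 : mw p - mw q = R := by rw [← hwmw, hw, wv_dot]
  have hvG : G.volt p q s - G.volt p q t
      = (1 - (L + R)⁻¹ * R) * (mw t - mw s) := by
    have hd := hvd
    rw [WMG.volt.eq_1 (G.delete e) p q s, WMG.volt.eq_1 (G.delete e) p q t, ← hMp] at hd
    rw [WMG.volt, WMG.volt, hmpA]
    simp only [hBapp]
    linear_combination hd - (L + R)⁻¹ * (mw t - mw s) * hR2
  have h1aR : 1 - (L + R)⁻¹ * R = L * (L + R)⁻¹ := by
    calc 1 - (L + R)⁻¹ * R = (L + R)⁻¹ * (L + R) - (L + R)⁻¹ * R := by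
          rw [inv_mul_cancel₀ hLR.ne']
    _ = L * (L + R)⁻¹ := by ring
  refine ⟨?_, ?_, ?_, ?_⟩
  · rw [hres, hvd, one_div]
    ring
  · rw [hres, hvG, h1aR]
    field_simp
    ring
  · rw [hres]
    have h1 : 0 ≤ (L + R)⁻¹ * (mw s - mw t)^2 := by positivity
    linarith
  · rw [hres]
    constructor
    · intro h
      have h0 : (L + R)⁻¹ * (mw s - mw t)^2 = 0 := by linarith
      have hD : mw s - mw t = 0 := by
        rcases mul_eq_zero.mp h0 with h' | h'
        · exact absurd h' (by positivity)
        · exact pow_eq_zero_iff (n := 2) (by norm_num) |>.mp h'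
      have h3 := hvG
      rw [show mw t - mw s = 0 by linarith, mul_zero, sub_eq_zero] at h3
      exact h3
    · intro h
      have h0 : G.volt p q s - G.volt p q t = 0 := by rw [h]; ring
      rw [hvG, h1aR] at h0
      have hD : mw t - mw s = 0 := by
        rcases mul_eq_zero.mp h0 with h' | h'
        · exact absurd h' (by positivity)
        · exact h'
      have h4 : (mw s - mw t)^2 = 0 := by
        rw [show mw s - mw t = 0 by linarith]
        ring
      rw [h4, mul_zero, sub_zero]
end
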